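/- arXiv:2211.07196 — 6 statements merged into one kernel-verified Lean document; each statement's English description precedes it below -/
import Mathlib

section
/- Let n ≥ 1 be an integer, let a < b be real numbers, and let 0 < p < ∞. If f ∈ 𝒟ⁿ([a,b]) satisfies f^{(n)}(t) ≥ n! for every t ∈ (a,b) and ‖f‖_{p,[a,b]} = D**(n,p,[a,b]), then f coincides on [a,b] with a monic real polynomial of degree n. -/
open Set Polynomial Nat MeasureTheory ENNReal

/-- `fd 0` belongs to `𝒟ⁿ([a,b])`, with `fd k` its `k`-th derivative: `fd k` exists and is
continuous on `[a,b]` for `0 ≤ k ≤ n-1`, and `fd n` is the derivative of `fd (n-1)` on `(a,b)`. -/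
def IsDn (n : ℕ) (a b : ℝ) (fd : ℕ → ℝ → ℝ) : Prop :=
  (∀ k, k + 1 < n → ∀ x ∈ Set.Icc a b, HasDerivWithinAt (fd k) (fd (k + 1) x) (Set.Icc a b) x) ∧
  ContinuousOn (fd (n - 1)) (Set.Icc a b) ∧
  (∀ x ∈ Set.Ioo a b, HasDerivAt (fd (n - 1)) (fd n x) x)

/-- `m_n(f) = inf_{a<t<b} |f^{(n)}(t)|`. -/
noncomputable def mIoo (n : ℕ) (a b : ℝ) (fd : ℕ → ℝ → ℝ) : ℝ :=
  sInf ((fun t => |fd n t|) '' Set.Ioo a b)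

/-- `‖f‖_{p,[a,b]}` for `0 < p < ∞`. -/
noncomputable def Lp (p a b : ℝ) (f : ℝ → ℝ) : ℝ :=
  (∫ t in a..b, |f t| ^ p) ^ (1 / p)

/-- `‖f‖_{∞,[a,b]}`. -/
noncomputable def Lsup (a b : ℝ) (f : ℝ → ℝ) : ℝ :=
  sSup ((fun t => |f t|) '' Set.Icc a b)

/-- `‖f‖_{p,[a,b]}` for `0 < p ≤ ∞`. -/
noncomputable def pnorm (p : ℝ≥0∞) (a b : ℝ) (f : ℝ → ℝ) : ℝ :=
  if p = ⊤ then Lsup a b f else Lp p.toReal a b f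

/-- `D**(n,p,[a,b])`, `p` finite. -/
noncomputable def Dstar (n : ℕ) (p a b : ℝ) : ℝ :=
  sInf { c | ∃ Q : Polynomial ℝ, Q.Monic ∧ Q.natDegree = n ∧ c = Lp p a b (fun x => Q.eval x) }

/-- `D**(n,∞,[a,b])`. -/
noncomputable def DstarInf (n : ℕ) (a b : ℝ) : ℝ :=
  sInf { c | ∃ Q : Polynomial ℝ, Q.Monic ∧ Q.natDegree = n ∧ c = Lsup a b (fun x => Q.eval x) }

/-- `C(n,p)`, `p` finite. -/
noncomputable def Cnp (n : ℕ) (p : ℝ) : ℝ :=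
  sSup { c | ∃ fd : ℕ → ℝ → ℝ, IsDn n 0 1 fd ∧ (∃ x ∈ Set.Icc (0:ℝ) 1, fd 0 x ≠ 0) ∧
    c = mIoo n 0 1 fd / Lp p 0 1 (fd 0) }

/-- `C(n,∞)`. -/
noncomputable def CnpInf (n : ℕ) : ℝ :=
  sSup { c | ∃ fd : ℕ → ℝ → ℝ, IsDn n 0 1 fd ∧ (∃ x ∈ Set.Icc (0:ℝ) 1, fd 0 x ≠ 0) ∧
    c = mIoo n 0 1 fd / Lsup 0 1 (fd 0) }

section Aux
open Filter Topology

noncomputable def DD (g : ℝ → ℝ) (s : Finset ℝ) : ℝ :=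
  ∑ x ∈ s, g x * (∏ y ∈ s.erase x, (x - y))⁻¹

lemma DD_singleton (g : ℝ → ℝ) (x : ℝ) : DD g {x} = g x := by
  simp [DD]

/-- Leading coefficient of a Lagrange basis polynomial. -/
lemma leadingCoeff_lagrange_basis (s : Finset ℝ) (x : ℝ) (hx : x ∈ s) :
    (Lagrange.basis s id x).leadingCoeff = (∏ y ∈ s.erase x, (x - y))⁻¹ := by
  unfold Lagrange.basis
  rw [Polynomial.leadingCoeff_prod, ← Finset.prod_inv_distrib]
  apply Finset.prod_congr rfl
  intro y hy
  unfold Lagrange.basisDivisor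
  rw [Polynomial.leadingCoeff_mul, Polynomial.leadingCoeff_C,
    (Polynomial.monic_X_sub_C (id y : ℝ)).leadingCoeff]
  simp

lemma sumInvProd (s : Finset ℝ) (h2 : 2 ≤ s.card) :
    ∑ x ∈ s, (∏ y ∈ s.erase x, (x - y))⁻¹ = 0 := by
  have hne : s.Nonempty := Finset.card_pos.mp (by omega)
  have hsum := Lagrange.sum_basis (Set.injOn_id _) hne
  have := congrArg (fun P : Polynomial ℝ => P.coeff (s.card - 1)) hsum
  simp only [Polynomial.finset_sum_coeff] at this
  have h1 : (1 : Polynomial ℝ).coeff (s.card - 1) = 0 := by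
    rw [Polynomial.coeff_one]
    simp only [ite_eq_right_iff]
    intro h; omega
  rw [h1] at this
  rw [← this]
  apply Finset.sum_congr rfl
  intro x hx
  have hdeg := Lagrange.natDegree_basis (Set.injOn_id (s : Set ℝ)) hx
  rw [← hdeg, Polynomial.coeff_natDegree, leadingCoeff_lagrange_basis s x hx]

lemma DD_insert (g : ℝ → ℝ) (s : Finset ℝ) (x : ℝ) (hx : x ∉ s) :
    DD g (insert x s) = g x * (∏ y ∈ s, (x - y))⁻¹
      + ∑ z ∈ s, g z * ((z - x) * ∏ y ∈ s.erase z, (z - y))⁻¹ := by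
  unfold DD
  rw [Finset.sum_insert hx, Finset.erase_insert hx]
  congr 1
  apply Finset.sum_congr rfl
  intro z hz
  have hzx : z ≠ x := fun h => hx (h ▸ hz)
  have hxz : x ∉ s.erase z := fun h => hx (Finset.mem_of_mem_erase h)
  rw [Finset.erase_insert_of_ne hzx.symm, Finset.prod_insert hxz]

/-- The key "stripping" identity. -/
lemma DD_strip (F : ℝ → ℝ) (v e : ℝ) (t : Finset ℝ) (he : e ∉ t) (hne : t.Nonempty) :
    DD (fun x => (F x - v) / (x - e)) t = DD (Function.update F e v) (insert e t) := by
  rw [DD_insert _ _ _ he]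
  have h1 : ∀ z ∈ t, Function.update F e v z = F z := by
    intro z hz
    exact Function.update_of_ne (fun h : z = e => he (h ▸ hz)) _ _
  rw [Function.update_self]
  have h2 : ∑ z ∈ t, Function.update F e v z * ((z - e) * ∏ y ∈ t.erase z, (z - y))⁻¹
      = ∑ z ∈ t, F z * ((z - e) * ∏ y ∈ t.erase z, (z - y))⁻¹ := by
    apply Finset.sum_congr rfl; intro z hz; rw [h1 z hz]
  rw [h2]
  have key : ∑ x ∈ insert e t, (∏ y ∈ (insert e t).erase x, (x - y))⁻¹ = 0 := by
    apply sumInvProd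
    rw [Finset.card_insert_of_notMem he]
    have := Finset.card_pos.mpr hne; omega
  rw [Finset.sum_insert he, Finset.erase_insert he] at key
  have key2 : ∑ x ∈ t, (∏ y ∈ (insert e t).erase x, (x - y))⁻¹
      = ∑ x ∈ t, ((x - e) * ∏ y ∈ t.erase x, (x - y))⁻¹ := by
    apply Finset.sum_congr rfl
    intro z hz
    have hzx : z ≠ e := fun h => he (h ▸ hz)
    have hez : e ∉ t.erase z := fun h => he (Finset.mem_of_mem_erase h)
    rw [Finset.erase_insert_of_ne hzx.symm, Finset.prod_insert hez]
  rw [key2] at key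
  unfold DD
  have expand : ∀ z ∈ t, (F z - v) / (z - e) * (∏ y ∈ t.erase z, (z - y))⁻¹
      = F z * ((z - e) * ∏ y ∈ t.erase z, (z - y))⁻¹
        - v * ((z - e) * ∏ y ∈ t.erase z, (z - y))⁻¹ := by
    intro z hz
    rw [div_eq_mul_inv, sub_mul, mul_inv]
    ring
  rw [Finset.sum_congr rfl expand, Finset.sum_sub_distrib, ← Finset.mul_sum]
  have h3 : ∑ x ∈ t, ((x - e) * ∏ y ∈ t.erase x, (x - y))⁻¹ = -(∏ y ∈ t, (e - y))⁻¹ := by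
    linarith [key]
  rw [h3]
  ring

section MVT

variable {n : ℕ} {a b : ℝ} {fd : ℕ → ℝ → ℝ}

lemma fd_cont (hf : IsDn n a b fd) (hn : 1 ≤ n) {k : ℕ} (hk : k ≤ n - 1) :
    ContinuousOn (fd k) (Set.Icc a b) := by
  rcases eq_or_lt_of_le hk with h | h
  · exact h ▸ hf.2.1
  · intro x hx
    exact (hf.1 k (by omega) x hx).continuousWithinAt

lemma fd_hasDerivAt (hf : IsDn n a b fd) (hn : 1 ≤ n) {k : ℕ} (hk : k + 1 ≤ n)
    {x : ℝ} (hx : x ∈ Set.Ioo a b) : HasDerivAt (fd k) (fd (k + 1) x) x := by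
  rcases eq_or_lt_of_le hk with h | h
  · have hk' : k = n - 1 := by omega
    subst hk'
    have h2 : n - 1 + 1 = n := by omega
    rw [h2]
    exact hf.2.2 x hx
  · exact (hf.1 k h x (Set.mem_Icc_of_Ioo hx)).hasDerivAt (Icc_mem_nhds hx.1 hx.2)

/-- Iterated Rolle: if `fd 0` agrees with a polynomial at `n+1` points of `[a,b]`,
then `fd n` agrees with the `n`-th derivative of the polynomial somewhere in `(a,b)`. -/
lemma exists_rolle_point (hf : IsDn n a b fd) (hn : 1 ≤ n) (hab : a < b) (P : Polynomial ℝ)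
    (s : Finset ℝ) (hs : ↑s ⊆ Set.Icc a b) (hcard : s.card = n + 1)
    (hz : ∀ x ∈ s, fd 0 x = P.eval x) :
    ∃ ξ ∈ Set.Ioo a b, fd n ξ = ((Polynomial.derivative)^[n] P).eval ξ := by
  set hd : ℕ → ℝ → ℝ := fun k x => fd k x - ((Polynomial.derivative)^[k] P).eval x with hhd
  have key : ∀ k, k ≤ n → ∃ t : Finset ℝ, t.card = n + 1 - k ∧ ↑t ⊆ Set.Icc a b ∧
      (1 ≤ k → ↑t ⊆ Set.Ioo a b) ∧ ∀ x ∈ t, hd k x = 0 := by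
    intro k
    induction k with
    | zero =>
      intro _
      exact ⟨s, by omega, hs, by omega, fun x hx => by simp [hhd, hz x hx]⟩
    | succ k ih =>
      intro hk1
      obtain ⟨t, htcard, htIcc, _, htzero⟩ := ih (by omega)
      have hm : t.card = (n - k) + 1 := by omega
      set m := n - k with hm'
      have hmpos : 1 ≤ m := by omega
      set e := t.orderIsoOfFin hm with he
      -- continuity of hd k on Icc a b
      have hcont : ContinuousOn (hd k) (Set.Icc a b) := by
        apply ContinuousOn.sub (fd_cont hf hn (by omega))
        exact (Polynomial.continuous _).continuousOn
      -- derivative of hd k at interior points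
      have hderiv' : ∀ x ∈ Set.Ioo a b, HasDerivAt (hd k) (hd (k+1) x) x := by
        intro x hx
        have h1 := fd_hasDerivAt hf hn (by omega : k + 1 ≤ n) hx
        have h2 : HasDerivAt (fun y => ((Polynomial.derivative)^[k] P).eval y)
            (((Polynomial.derivative)^[k+1] P).eval x) x := by
          have := Polynomial.hasDerivAt ((Polynomial.derivative)^[k] P) x
          rwa [← Function.iterate_succ_apply' Polynomial.derivative k P] at this
        exact h1.sub h2
      -- Rolle on each consecutive pair
      have hroll : ∀ i : Fin m, ∃ ξ : ℝ,
          ξ ∈ Set.Ioo (e i.castSucc : ℝ) (e i.succ : ℝ) ∧ hd (k+1) ξ = 0 := by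
        intro i
        have hlt : (e i.castSucc : ℝ) < (e i.succ : ℝ) := by
          have : i.castSucc < i.succ := Fin.castSucc_lt_succ
          exact e.strictMono this
        have hsub : Set.Icc (e i.castSucc : ℝ) (e i.succ : ℝ) ⊆ Set.Icc a b := by
          apply Set.Icc_subset_Icc
          · exact (htIcc (e i.castSucc).2).1
          · exact (htIcc (e i.succ).2).2
        have hioo : Set.Ioo (e i.castSucc : ℝ) (e i.succ : ℝ) ⊆ Set.Ioo a b := by
          apply Set.Ioo_subset_Ioo
          · exact (htIcc (e i.castSucc).2).1
          · exact (htIcc (e i.succ).2).2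
        have := exists_hasDerivAt_eq_zero (f := hd k) (f' := hd (k+1)) hlt
          (hcont.mono hsub)
          (by rw [htzero _ (e i.castSucc).2, htzero _ (e i.succ).2])
          (fun x hx => hderiv' x (hioo hx))
        obtain ⟨c, hc, hc0⟩ := this
        exact ⟨c, hc, hc0⟩
      choose ξ hξmem hξzero using hroll
      have hξmono : StrictMono ξ := by
        intro i j hij
        have h1 : ξ i < (e i.succ : ℝ) := (hξmem i).2
        have h2 : (e j.castSucc : ℝ) < ξ j := (hξmem j).1
        have h3 : (e i.succ : ℝ) ≤ (e j.castSucc : ℝ) := by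
          apply e.monotone
          rw [Fin.le_def, Fin.val_succ, Fin.coe_castSucc]
          exact hij
        linarith
      refine ⟨Finset.image ξ Finset.univ, ?_, ?_, ?_, ?_⟩
      · rw [Finset.card_image_of_injective _ hξmono.injective, Finset.card_univ,
          Fintype.card_fin]
        omega
      · intro x hx
        simp only [Finset.coe_image, Set.mem_image] at hx
        obtain ⟨i, _, rfl⟩ := hx
        have h1 : a ≤ (e i.castSucc : ℝ) := (htIcc (e i.castSucc).2).1
        have h2 : (e i.succ : ℝ) ≤ b := (htIcc (e i.succ).2).2
        exact ⟨le_of_lt (lt_of_le_of_lt h1 (hξmem i).1),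
          le_of_lt (lt_of_lt_of_le (hξmem i).2 h2)⟩
      · intro _ x hx
        simp only [Finset.coe_image, Set.mem_image] at hx
        obtain ⟨i, _, rfl⟩ := hx
        have h1 : a ≤ (e i.castSucc : ℝ) := (htIcc (e i.castSucc).2).1
        have h2 : (e i.succ : ℝ) ≤ b := (htIcc (e i.succ).2).2
        exact ⟨lt_of_le_of_lt h1 (hξmem i).1, lt_of_lt_of_le (hξmem i).2 h2⟩
      · intro x hx
        simp only [Finset.mem_image] at hx
        obtain ⟨i, _, rfl⟩ := hx
        exact hξzero i
  obtain ⟨t, htcard, _, htIoo, htzero⟩ := key n le_rfl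
  have : t.Nonempty := Finset.card_pos.mp (by omega)
  obtain ⟨ξ, hξ⟩ := this
  refine ⟨ξ, htIoo hn hξ, ?_⟩
  have := htzero ξ hξ
  simp only [hhd] at this
  linarith

/-- Mean value theorem for divided differences. -/
lemma DD_MVT (hf : IsDn n a b fd) (hn : 1 ≤ n) (hab : a < b)
    (s : Finset ℝ) (hs : ↑s ⊆ Set.Icc a b) (hcard : s.card = n + 1) :
    ∃ ξ ∈ Set.Ioo a b, DD (fd 0) s = fd n ξ / n ! := by
  set P := Lagrange.interpolate s id (fd 0) with hP
  have hz : ∀ x ∈ s, fd 0 x = P.eval x := by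
    intro x hx
    rw [hP]
    have := Lagrange.eval_interpolate_at_node (fd 0) (Set.injOn_id (s : Set ℝ)) hx
    simpa using this.symm
  obtain ⟨ξ, hξmem, hξ⟩ := exists_rolle_point hf hn hab P s hs hcard hz
  refine ⟨ξ, hξmem, ?_⟩
  -- natDegree P ≤ n
  have hdegP : P.natDegree ≤ n := by
    rcases eq_or_ne P 0 with h0 | h0
    · simp [h0]
    · have := Lagrange.degree_interpolate_lt (fd 0) (Set.injOn_id (s : Set ℝ))
      rw [← hP, hcard] at this
      have := (Polynomial.natDegree_lt_iff_degree_lt h0).mpr this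
      omega
  -- derivative^[n] P is the constant n! * coeff n
  have hconst : (Polynomial.derivative)^[n] P = Polynomial.C ((n ! : ℝ) * P.coeff n) := by
    have hdeg' : ((Polynomial.derivative)^[n] P).natDegree ≤ 0 := by
      have := Polynomial.natDegree_iterate_derivative P n
      omega
    rw [Polynomial.eq_C_of_natDegree_le_zero hdeg']
    congr 1
    rw [Polynomial.coeff_iterate_derivative]
    simp [Nat.descFactorial_self, mul_comm]
  -- coeff n P = DD (fd 0) s
  have hcoeff : P.coeff n = DD (fd 0) s := by
    rw [hP, Lagrange.interpolate_apply, Polynomial.finset_sum_coeff]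
    unfold DD
    apply Finset.sum_congr rfl
    intro x hx
    rw [Polynomial.coeff_C_mul]
    congr 1
    have hdeg := Lagrange.natDegree_basis (Set.injOn_id (s : Set ℝ)) hx
    rw [hcard] at hdeg
    simp only [Nat.add_sub_cancel] at hdeg
    rw [← hdeg, Polynomial.coeff_natDegree, leadingCoeff_lagrange_basis s x hx]
  rw [hconst, Polynomial.eval_C, hcoeff] at hξ
  have hfac : (n ! : ℝ) ≠ 0 := by
    exact_mod_cast Nat.factorial_ne_zero n
  field_simp
  linarith [hξ]

end MVT

section Selection

/-- Product `∏ (e - y)` over a finset not containing `e` is nonzero. -/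
lemma prod_sub_ne_zero (s : Finset ℝ) (e : ℝ) (he : e ∉ s) :
    ∏ y ∈ s, (e - y) ≠ 0 := by
  rw [Finset.prod_ne_zero_iff]
  intro y hy
  have : e ≠ y := fun h => he (h ▸ hy)
  exact sub_ne_zero_of_ne this

lemma tendsto_kappa (s : Finset ℝ) (e : ℝ) (he : e ∉ s) (u : ℕ → ℝ)
    (hu : Tendsto u atTop (𝓝 e)) :
    Tendsto (fun k => (∏ y ∈ s, (u k - y))⁻¹) atTop (𝓝 ((∏ y ∈ s, (e - y))⁻¹)) := by
  apply Tendsto.inv₀ _ (prod_sub_ne_zero s e he)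
  apply tendsto_finset_prod
  intro y _
  exact hu.sub tendsto_const_nhds

lemma tendsto_B (F : ℝ → ℝ) (s : Finset ℝ) (e : ℝ) (he : e ∉ s) (u : ℕ → ℝ)
    (hu : Tendsto u atTop (𝓝 e)) :
    Tendsto (fun k => ∑ z ∈ s, F z * ((z - u k) * ∏ y ∈ s.erase z, (z - y))⁻¹) atTop
      (𝓝 (∑ z ∈ s, F z * ((z - e) * ∏ y ∈ s.erase z, (z - y))⁻¹)) := by
  apply tendsto_finset_sum
  intro z hz
  apply Filter.Tendsto.const_mul
  apply Tendsto.inv₀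
  · exact (tendsto_const_nhds.sub hu).mul tendsto_const_nhds
  · apply mul_ne_zero
    · exact sub_ne_zero_of_ne (fun h => he (h ▸ hz))
    · apply prod_sub_ne_zero
      exact Finset.notMem_erase z s
  
lemma eventually_not_mem (s : Finset ℝ) (e : ℝ) (he : e ∉ s) (u : ℕ → ℝ)
    (hu : Tendsto u atTop (𝓝 e)) : ∀ᶠ k in atTop, u k ∉ s := by
  have h : ∀ y ∈ s, ∀ᶠ k in atTop, u k ≠ y := by
    intro y hy
    exact hu.eventually_ne (fun h => he (h ▸ hy))
  have := (Filter.eventually_all_finset s).mpr h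
  filter_upwards [this] with k hk hmem
  exact hk (u k) hmem rfl

lemma dense_S {a b : ℝ} (hab : a < b) (T : Finset ℝ) :
    Set.Icc a b ⊆ closure (Set.Icc a b \ ↑T) := by
  intro x hx
  rw [mem_closure_iff_nhds]
  intro U hU
  obtain ⟨ε, hε, hball⟩ := Metric.mem_nhds_iff.mp hU
  rcases lt_or_ge x b with hxb | hxb
  · have h1 : x < min b (x + ε) := lt_min hxb (by linarith)
    have hinf : (Set.Ioo x (min b (x + ε))).Infinite := Set.Ioo_infinite h1
    obtain ⟨y, hy⟩ := (hinf.diff T.finite_toSet).nonempty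
    obtain ⟨⟨hy1, hy2⟩, hyT⟩ := hy
    refine ⟨y, ?_, ⟨⟨le_trans hx.1 (le_of_lt hy1), le_of_lt (lt_of_lt_of_le hy2 (min_le_left _ _))⟩, hyT⟩⟩
    apply hball
    rw [Metric.mem_ball, Real.dist_eq, abs_sub_lt_iff]
    constructor
    · have := lt_of_lt_of_le hy2 (min_le_right _ _); linarith
    · linarith
  · have hxb' : x = b := le_antisymm hx.2 hxb
    have h1 : max a (b - ε) < b := max_lt hab (by linarith)
    have hinf : (Set.Ioo (max a (b - ε)) b).Infinite := Set.Ioo_infinite h1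
    obtain ⟨y, hy⟩ := (hinf.diff T.finite_toSet).nonempty
    obtain ⟨⟨hy1, hy2⟩, hyT⟩ := hy
    refine ⟨y, ?_, ⟨⟨le_of_lt (lt_of_le_of_lt (le_max_left _ _) hy1), le_of_lt hy2⟩, hyT⟩⟩
    apply hball
    rw [Metric.mem_ball, Real.dist_eq, abs_sub_lt_iff, hxb']
    constructor
    · linarith
    · have := lt_of_le_of_lt (le_max_right _ _) hy1; linarith

/-- The selection lemma: there is a stripping point `e` with assigned value `v`. -/
lemma select {a b : ℝ} (hab : a < b) (m : ℕ) (T : Finset ℝ) (F : ℝ → ℝ)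
    (hDD : ∀ s : Finset ℝ, ↑s ⊆ Set.Icc a b \ ↑T → s.card = m + 2 → 1 ≤ DD F s) :
    ∃ e ∈ Set.Icc a b, ∃ v : ℝ,
      (∀ x ∈ Set.Icc a b \ ↑T, 0 ≤ v * (F x - v)) ∧
      (∀ s : Finset ℝ, ↑s ⊆ (Set.Icc a b \ ↑T) \ {e} → s.card = m + 1 →
        1 ≤ DD (Function.update F e v) (insert e s)) := by
  set S : Set ℝ := Set.Icc a b \ ↑T with hS
  have hScc : S ⊆ Set.Icc a b := Set.diff_subset
  have hSne : S.Nonempty := ((Set.Ioo_infinite hab).mono Set.Ioo_subset_Icc_self).diff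
    T.finite_toSet |>.nonempty
  -- helper : DD of update at (e,v) over insert e s, for e ∉ s
  have hDDupdate : ∀ (e v : ℝ) (s : Finset ℝ), e ∉ s →
      DD (Function.update F e v) (insert e s)
        = v * (∏ y ∈ s, (e - y))⁻¹
          + ∑ z ∈ s, F z * ((z - e) * ∏ y ∈ s.erase z, (z - y))⁻¹ := by
    intro e v s hes
    rw [DD_insert _ _ _ hes, Function.update_self]
    congr 1
    apply Finset.sum_congr rfl
    intro z hz
    rw [Function.update_of_ne (fun h : z = e => hes (h ▸ hz))]
  by_cases hA : ∃ e ∈ S, F e = 0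
  · -- Case A : F vanishes somewhere on S
    obtain ⟨e, heS, heF⟩ := hA
    refine ⟨e, hScc heS, 0, fun x _ => by simp, ?_⟩
    intro s hs hcard
    have hupdate : Function.update F e 0 = F := by
      rw [← heF]; exact Function.update_eq_self e F
    rw [hupdate]
    apply hDD
    · rw [Finset.coe_insert]
      intro x hx
      rcases hx with rfl | hx
      · exact heS
      · exact ((hs hx).1 : x ∈ S)
    · have hes : e ∉ s := fun h => (hs h).2 rfl
      rw [Finset.card_insert_of_notMem hes, hcard]
  · by_cases hB : ∀ x ∈ S, 0 < F x
    · -- Case B : F > 0 on S ; take v = inf F(S)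
      have hRne : (F '' S).Nonempty := hSne.image F
      have hRbdd : BddBelow (F '' S) := ⟨0, fun y ⟨x, hx, hxy⟩ => hxy ▸ le_of_lt (hB x hx)⟩
      set v := sInf (F '' S) with hv
      have hvle : ∀ x ∈ S, v ≤ F x := fun x hx => csInf_le hRbdd ⟨x, hx, rfl⟩
      have hv0 : 0 ≤ v := le_csInf hRne (fun y ⟨x, hx, hxy⟩ => hxy ▸ le_of_lt (hB x hx))
      obtain ⟨u', hu'anti, hu'tend, hu'mem⟩ := exists_seq_tendsto_sInf hRne hRbdd
      choose x hxS hxF using fun k => hu'mem k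
      obtain ⟨e, heIcc, ψ, hψmono, hψtend⟩ := isCompact_Icc.tendsto_subseq
        (fun k => hScc (hxS k))
      refine ⟨e, heIcc, v, fun y hy => mul_nonneg hv0 (by linarith [hvle y hy]), ?_⟩
      intro s hs hcard
      have hes : e ∉ s := fun h => (hs h).2 rfl
      set u : ℕ → ℝ := fun k => x (ψ k) with hu
      have hutend : Tendsto u atTop (𝓝 e) := hψtend
      have hFtend : Tendsto (fun k => F (u k)) atTop (𝓝 v) := by
        have : (fun k => F (u k)) = u' ∘ ψ := by
          funext k; exact hxF (ψ k)
        rw [this]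
        exact hu'tend.comp hψmono.tendsto_atTop
      have hev : ∀ᶠ k in atTop, 1 ≤ F (u k) * (∏ y ∈ s, (u k - y))⁻¹
          + ∑ z ∈ s, F z * ((z - u k) * ∏ y ∈ s.erase z, (z - y))⁻¹ := by
        filter_upwards [eventually_not_mem s e hes u hutend] with k hk
        have h1 := hDD (insert (u k) s) ?_ ?_
        · rwa [DD_insert _ _ _ hk] at h1
        · rw [Finset.coe_insert]
          intro y hy
          rcases hy with rfl | hy
          · exact hxS (ψ k)
          · exact (hs hy).1
        · rw [Finset.card_insert_of_notMem hk, hcard]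
      have htendsum : Tendsto (fun k => F (u k) * (∏ y ∈ s, (u k - y))⁻¹
          + ∑ z ∈ s, F z * ((z - u k) * ∏ y ∈ s.erase z, (z - y))⁻¹) atTop
          (𝓝 (v * (∏ y ∈ s, (e - y))⁻¹
            + ∑ z ∈ s, F z * ((z - e) * ∏ y ∈ s.erase z, (z - y))⁻¹)) :=
        (hFtend.mul (tendsto_kappa s e hes u hutend)).add (tendsto_B F s e hes u hutend)
      have := ge_of_tendsto htendsum hev
      rw [hDDupdate e v s hes]
      linarith
    · by_cases hC : ∀ x ∈ S, F x < 0
      · -- Case C : F < 0 on S ; take v = sup F(S)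
        have hRne : (F '' S).Nonempty := hSne.image F
        have hRbdd : BddAbove (F '' S) := ⟨0, fun y ⟨x, hx, hxy⟩ => hxy ▸ le_of_lt (hC x hx)⟩
        set v := sSup (F '' S) with hv
        have hvle : ∀ x ∈ S, F x ≤ v := fun x hx => le_csSup hRbdd ⟨x, hx, rfl⟩
        have hv0 : v ≤ 0 := csSup_le hRne (fun y ⟨x, hx, hxy⟩ => hxy ▸ le_of_lt (hC x hx))
        obtain ⟨u', hu'mono, hu'tend, hu'mem⟩ := exists_seq_tendsto_sSup hRne hRbdd
        choose x hxS hxF using fun k => hu'mem k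
        obtain ⟨e, heIcc, ψ, hψmono, hψtend⟩ := isCompact_Icc.tendsto_subseq
          (fun k => hScc (hxS k))
        refine ⟨e, heIcc, v, ?_, ?_⟩
        · intro y hy
          have h1 := hvle y hy
          nlinarith
        intro s hs hcard
        have hes : e ∉ s := fun h => (hs h).2 rfl
        set u : ℕ → ℝ := fun k => x (ψ k) with hu
        have hutend : Tendsto u atTop (𝓝 e) := hψtend
        have hFtend : Tendsto (fun k => F (u k)) atTop (𝓝 v) := by
          have : (fun k => F (u k)) = u' ∘ ψ := by
            funext k; exact hxF (ψ k)
          rw [this]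
          exact hu'tend.comp hψmono.tendsto_atTop
        have hev : ∀ᶠ k in atTop, 1 ≤ F (u k) * (∏ y ∈ s, (u k - y))⁻¹
            + ∑ z ∈ s, F z * ((z - u k) * ∏ y ∈ s.erase z, (z - y))⁻¹ := by
          filter_upwards [eventually_not_mem s e hes u hutend] with k hk
          have h1 := hDD (insert (u k) s) ?_ ?_
          · rwa [DD_insert _ _ _ hk] at h1
          · rw [Finset.coe_insert]
            intro y hy
            rcases hy with rfl | hy
            · exact hxS (ψ k)
            · exact (hs hy).1
          · rw [Finset.card_insert_of_notMem hk, hcard]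
        have htendsum : Tendsto (fun k => F (u k) * (∏ y ∈ s, (u k - y))⁻¹
            + ∑ z ∈ s, F z * ((z - u k) * ∏ y ∈ s.erase z, (z - y))⁻¹) atTop
            (𝓝 (v * (∏ y ∈ s, (e - y))⁻¹
              + ∑ z ∈ s, F z * ((z - e) * ∏ y ∈ s.erase z, (z - y))⁻¹)) :=
          (hFtend.mul (tendsto_kappa s e hes u hutend)).add (tendsto_B F s e hes u hutend)
        have := ge_of_tendsto htendsum hev
        rw [hDDupdate e v s hes]
        linarith
      · -- Case D : F takes both signs on S ; take v = 0 at a two-sided sign point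
        push_neg at hB hC
        obtain ⟨xm, hxmS, hxm⟩ := hB
        obtain ⟨xp, hxpS, hxp⟩ := hC
        have hxm' : F xm < 0 := lt_of_le_of_ne hxm (fun h => hA ⟨xm, hxmS, h⟩)
        have hxp' : 0 < F xp := lt_of_le_of_ne hxp (fun h => hA ⟨xp, hxpS, h.symm⟩)
        set U : Set ℝ := {x ∈ S | F x < 0} with hU
        set V : Set ℝ := {x ∈ S | 0 < F x} with hV
        have hSUV : S ⊆ U ∪ V := by
          intro x hx
          rcases lt_trichotomy (F x) 0 with h | h | h
          · exact Or.inl ⟨hx, h⟩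
          · exact absurd ⟨x, hx, h⟩ hA
          · exact Or.inr ⟨hx, h⟩
        have hIccsub : Set.Icc a b ⊆ closure U ∪ closure V := by
          intro x hx
          have := dense_S hab T hx
          rw [← closure_union]
          exact closure_mono hSUV this
        obtain ⟨e, heIcc, heU, heV⟩ : ∃ e, e ∈ Set.Icc a b ∧ e ∈ closure U ∧ e ∈ closure V := by
          have := (isPreconnected_closed_iff.mp isPreconnected_Icc) (closure U) (closure V)
            isClosed_closure isClosed_closure hIccsub
            ⟨xm, hScc hxmS, subset_closure ⟨hxmS, hxm'⟩⟩
            ⟨xp, hScc hxpS, subset_closure ⟨hxpS, hxp'⟩⟩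
          obtain ⟨e, he1, he2, he3⟩ := this
          exact ⟨e, he1, he2, he3⟩
        refine ⟨e, heIcc, 0, fun x _ => by simp, ?_⟩
        intro s hs hcard
        have hes : e ∉ s := fun h => (hs h).2 rfl
        set κe : ℝ := (∏ y ∈ s, (e - y))⁻¹ with hκe
        have hκne : κe ≠ 0 := inv_ne_zero (prod_sub_ne_zero s e hes)
        -- choose the sequence from U or V according to the sign of κe
        rcases hκne.lt_or_gt with hκneg | hκpos
        · -- κe < 0 : use V (F > 0)
          obtain ⟨u, huV, hutend⟩ := mem_closure_iff_seq_limit.mp heV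
          have hκtend := tendsto_kappa s e hes u hutend
          have hκev : ∀ᶠ k in atTop, (∏ y ∈ s, (u k - y))⁻¹ < 0 :=
            hκtend.eventually (eventually_lt_nhds hκneg)
          have hev : ∀ᶠ k in atTop,
              1 ≤ ∑ z ∈ s, F z * ((z - u k) * ∏ y ∈ s.erase z, (z - y))⁻¹ := by
            filter_upwards [eventually_not_mem s e hes u hutend, hκev] with k hk hκk
            have h1 := hDD (insert (u k) s) ?_ ?_
            · rw [DD_insert _ _ _ hk] at h1
              have h2 : F (u k) * (∏ y ∈ s, (u k - y))⁻¹ ≤ 0 :=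
                mul_nonpos_of_nonneg_of_nonpos (le_of_lt (huV k).2) (le_of_lt hκk)
              linarith
            · rw [Finset.coe_insert]
              intro y hy
              rcases hy with rfl | hy
              · exact (huV k).1
              · exact (hs hy).1
            · rw [Finset.card_insert_of_notMem hk, hcard]
          have hBtend := tendsto_B F s e hes u hutend
          have := ge_of_tendsto hBtend hev
          rw [hDDupdate e 0 s hes]
          linarith
        · -- κe > 0 : use U (F < 0)
          obtain ⟨u, huU, hutend⟩ := mem_closure_iff_seq_limit.mp heU
          have hκtend := tendsto_kappa s e hes u hutend
          have hκev : ∀ᶠ k in atTop, 0 < (∏ y ∈ s, (u k - y))⁻¹ :=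
            hκtend.eventually (eventually_gt_nhds hκpos)
          have hev : ∀ᶠ k in atTop,
              1 ≤ ∑ z ∈ s, F z * ((z - u k) * ∏ y ∈ s.erase z, (z - y))⁻¹ := by
            filter_upwards [eventually_not_mem s e hes u hutend, hκev] with k hk hκk
            have h1 := hDD (insert (u k) s) ?_ ?_
            · rw [DD_insert _ _ _ hk] at h1
              have h2 : F (u k) * (∏ y ∈ s, (u k - y))⁻¹ ≤ 0 :=
                mul_nonpos_of_nonpos_of_nonneg (le_of_lt (huU k).2) (le_of_lt hκk)
              linarith
            · rw [Finset.coe_insert]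
              intro y hy
              rcases hy with rfl | hy
              · exact (huU k).1
              · exact (hs hy).1
            · rw [Finset.card_insert_of_notMem hk, hcard]
          have hBtend := tendsto_B F s e hes u hutend
          have := ge_of_tendsto hBtend hev
          rw [hDDupdate e 0 s hes]
          linarith

end Selection

/-- The core induction: a function all of whose `m`-th divided differences on
`[a,b] \ T` are `≥ 1` dominates a monic polynomial of degree `m` in the squeezing sense. -/
lemma squeeze_core {a b : ℝ} (hab : a < b) :
    ∀ (m : ℕ) (T : Finset ℝ) (F : ℝ → ℝ),
    (∀ s : Finset ℝ, ↑s ⊆ Set.Icc a b \ ↑T → s.card = m + 1 → 1 ≤ DD F s) →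
    ∃ W : Polynomial ℝ, W.Monic ∧ W.natDegree = m ∧
      ∀ x ∈ Set.Icc a b \ ↑T, (W.eval x) ^ 2 ≤ F x * W.eval x := by
  intro m
  induction m with
  | zero =>
    intro T F hDD
    refine ⟨1, monic_one, natDegree_one, ?_⟩
    intro x hx
    have h1 : 1 ≤ DD F {x} := by
      apply hDD {x} _ (by simp)
      simpa using hx
    have h2 : DD F {x} = F x := by simp [DD]
    rw [h2] at h1
    simp only [Polynomial.eval_one]
    nlinarith
  | succ m ih =>
    intro T F hDD
    obtain ⟨e, heIcc, v, hC2, hC1⟩ := select hab m T F hDD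
    set F1 : ℝ → ℝ := fun x => (F x - v) / (x - e) with hF1
    have hDD1 : ∀ s : Finset ℝ, ↑s ⊆ Set.Icc a b \ ↑(insert e T) → s.card = m + 1 →
        1 ≤ DD F1 s := by
      intro s hs hcard
      have hsub : ∀ x ∈ s, x ∈ (Set.Icc a b \ ↑T) \ {e} := by
        intro x hx
        have h := hs hx
        rw [Finset.coe_insert] at h
        refine ⟨⟨h.1, fun hT => h.2 (Set.mem_insert_iff.mpr (Or.inr hT))⟩, ?_⟩
        intro hxe
        exact h.2 (Set.mem_insert_iff.mpr (Or.inl hxe))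
      have hes : e ∉ s := fun h => (hsub e h).2 rfl
      have hne : s.Nonempty := Finset.card_pos.mp (by omega)
      rw [hF1, DD_strip F v e s hes hne]
      exact hC1 s (fun x hx => hsub x hx) hcard
    obtain ⟨V, hVmonic, hVdeg, hV⟩ := ih (insert e T) F1 hDD1
    refine ⟨(X - C e) * V, (monic_X_sub_C e).mul hVmonic, ?_, ?_⟩
    · rw [Polynomial.natDegree_mul (X_sub_C_ne_zero e) hVmonic.ne_zero,
        natDegree_X_sub_C, hVdeg]
      omega
    · intro x hx
      by_cases hxe : x = e
      · subst hxe
        simp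
      · have hx1 : x ∈ Set.Icc a b \ ↑(insert e T) := by
          refine ⟨hx.1, ?_⟩
          rw [Finset.coe_insert]
          intro h
          rcases Set.mem_insert_iff.mp h with h | h
          · exact hxe h
          · exact hx.2 h
        have hineq := hV x hx1
        have hC2x := hC2 x hx
        set A := V.eval x with hA
        set B := F1 x with hB
        have hxene : x - e ≠ 0 := sub_ne_zero_of_ne hxe
        have hFx : F x = v + (x - e) * B := by
          rw [hB, hF1]
          field_simp
          ring
        have heval : ((X - C e) * V).eval x = (x - e) * A := by
          simp [hA]
        rw [heval]
        have key : 0 ≤ v * ((x - e) * A) := by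
          rcases eq_or_ne A 0 with h0 | h0
          · simp [h0]
          · have hq : A ^ 2 ≤ B * A := hineq
            have hA2 : 0 < A ^ 2 := by positivity
            have hABpos : 0 < A * B := by nlinarith
            have hvB : 0 ≤ v * ((x - e) * B) := by
              have : v * ((x - e) * B) = v * (F x - v) := by rw [hFx]; ring
              rw [this]; exact hC2x
            rcases h0.lt_or_gt with hAneg | hApos
            · have hBneg : B < 0 := by nlinarith
              have hxev : 0 ≤ -(v * (x - e)) := by nlinarith
              nlinarith
            · have hBpos : 0 < B := by nlinarith
              have hxev : 0 ≤ v * (x - e) := by nlinarith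
              nlinarith
        have hq : A ^ 2 ≤ B * A := hineq
        have h2 : (x - e) ^ 2 * (A ^ 2) ≤ (x - e) ^ 2 * (B * A) := by
          apply mul_le_mul_of_nonneg_left hq (sq_nonneg _)
        calc ((x - e) * A) ^ 2 = (x - e) ^ 2 * A ^ 2 := by ring
        _ ≤ (x - e) ^ 2 * (B * A) := h2
        _ ≤ (x - e) ^ 2 * (B * A) + v * ((x - e) * A) := by linarith
        _ = F x * ((x - e) * A) := by rw [hFx]; ring

section ZeroIntegral

/-- A nonnegative continuous function on `[a,b]` with zero integral vanishes. -/
lemma eq_zero_of_integral_zero {a b : ℝ} (hab : a < b) {g : ℝ → ℝ}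
    (hg : ContinuousOn g (Set.Icc a b)) (hnn : ∀ x ∈ Set.Icc a b, 0 ≤ g x)
    (hint : (∫ t in a..b, g t) = 0) : ∀ x ∈ Set.Icc a b, g x = 0 := by
  intro x₀ hx₀
  by_contra hne
  have hc : 0 < g x₀ := lt_of_le_of_ne (hnn x₀ hx₀) (Ne.symm hne)
  have hev : ∀ᶠ y in nhdsWithin x₀ (Set.Icc a b), g x₀ / 2 < g y :=
    (hg x₀ hx₀).eventually (eventually_gt_nhds (by linarith))
  rw [Filter.eventually_iff, mem_nhdsWithin] at hev
  obtain ⟨U, hUopen, hx₀U, hU⟩ := hev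
  obtain ⟨ε, hε, hball⟩ := Metric.isOpen_iff.mp hUopen x₀ hx₀U
  -- find a nondegenerate closed interval inside ball ∩ Icc
  obtain ⟨c₁, d₁, hcd, hsub⟩ : ∃ c₁ d₁ : ℝ, c₁ < d₁ ∧
      Set.Icc c₁ d₁ ⊆ Metric.ball x₀ ε ∩ Set.Icc a b := by
    rcases lt_or_ge x₀ b with hxb | hxb
    · refine ⟨x₀, min b (x₀ + ε / 2), lt_min hxb (by linarith), ?_⟩
      intro y hy
      have h1 : y ≤ x₀ + ε / 2 := le_trans hy.2 (min_le_right _ _)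
      have h2 : y ≤ b := le_trans hy.2 (min_le_left _ _)
      refine ⟨?_, le_trans hx₀.1 hy.1, h2⟩
      rw [Metric.mem_ball, Real.dist_eq, abs_sub_lt_iff]
      constructor <;> [linarith [hy.1]; linarith [hy.1]]
    · have hxb' : x₀ = b := le_antisymm hx₀.2 hxb
      refine ⟨max a (b - ε / 2), b, max_lt hab (by linarith), ?_⟩
      intro y hy
      have h1 : b - ε / 2 ≤ y := le_trans (le_max_right _ _) hy.1
      have h2 : a ≤ y := le_trans (le_max_left _ _) hy.1
      refine ⟨?_, h2, hy.2⟩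
      rw [Metric.mem_ball, Real.dist_eq, hxb', abs_sub_lt_iff]
      constructor <;> [linarith [hy.2]; linarith [hy.2]]
  have hsubIcc : Set.Icc c₁ d₁ ⊆ Set.Icc a b := fun y hy => (hsub hy).2
  have hKg : ∀ y ∈ Set.Icc c₁ d₁, g x₀ / 2 ≤ g y := by
    intro y hy
    exact le_of_lt (hU ⟨hball (hsub hy).1, (hsub hy).2⟩)
  have ha_c : a ≤ c₁ := (hsubIcc (Set.left_mem_Icc.mpr hcd.le)).1
  have hd_b : d₁ ≤ b := (hsubIcc (Set.right_mem_Icc.mpr hcd.le)).2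
  have hint1 : IntervalIntegrable g volume a c₁ := by
    apply ContinuousOn.intervalIntegrable
    rw [Set.uIcc_of_le ha_c]
    exact hg.mono (Set.Icc_subset_Icc le_rfl (by linarith))
  have hint2 : IntervalIntegrable g volume c₁ d₁ := by
    apply ContinuousOn.intervalIntegrable
    rw [Set.uIcc_of_le hcd.le]
    exact hg.mono hsubIcc
  have hint3 : IntervalIntegrable g volume d₁ b := by
    apply ContinuousOn.intervalIntegrable
    rw [Set.uIcc_of_le hd_b]
    exact hg.mono (Set.Icc_subset_Icc (by linarith) le_rfl)
  have hsplit : (∫ t in a..c₁, g t) + (∫ t in c₁..d₁, g t) + (∫ t in d₁..b, g t)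
      = ∫ t in a..b, g t := by
    rw [intervalIntegral.integral_add_adjacent_intervals hint1 hint2,
      intervalIntegral.integral_add_adjacent_intervals (hint1.trans hint2) hint3]
  have h1 : 0 ≤ ∫ t in a..c₁, g t :=
    intervalIntegral.integral_nonneg ha_c
      (fun u hu => hnn u ⟨hu.1, by linarith [hu.2]⟩)
  have h3 : 0 ≤ ∫ t in d₁..b, g t :=
    intervalIntegral.integral_nonneg hd_b
      (fun u hu => hnn u ⟨by linarith [hu.1], hu.2⟩)
  have h2 : (d₁ - c₁) * (g x₀ / 2) ≤ ∫ t in c₁..d₁, g t := by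
    have := intervalIntegral.integral_mono_on (f := fun _ => g x₀ / 2) hcd.le
      (intervalIntegrable_const) hint2 hKg
    rwa [intervalIntegral.integral_const, smul_eq_mul] at this
  have hpos : 0 < (d₁ - c₁) * (g x₀ / 2) := by
    apply _root_.mul_pos (by linarith) (by linarith)
  rw [hint] at hsplit
  linarith

end ZeroIntegral


end Aux

/-- For `0 < p < ∞`, if `f ∈ 𝒟ⁿ([a,b])` has `f^{(n)} ≥ n!` on `(a,b)` and `‖f‖_p` equals
`D**(n,p,[a,b])`, then `f` coincides on `[a,b]` with a monic polynomial of degree `n`. -/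
theorem stmt4 (n : ℕ) (hn : 1 ≤ n) (a b : ℝ) (hab : a < b) (p : ℝ) (hp : 0 < p)
    (fd : ℕ → ℝ → ℝ) (hf : IsDn n a b fd)
    (hderiv : ∀ t ∈ Set.Ioo a b, (n ! : ℝ) ≤ fd n t)
    (hnorm : Lp p a b (fd 0) = Dstar n p a b) :
    ∃ Q : Polynomial ℝ, Q.Monic ∧ Q.natDegree = n ∧
      ∀ x ∈ Set.Icc a b, fd 0 x = Q.eval x := by
  have hfcont : ContinuousOn (fd 0) (Set.Icc a b) := fd_cont hf hn (by omega)
  -- all n-th divided differences of fd 0 are ≥ 1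
  have hDDf : ∀ s : Finset ℝ, ↑s ⊆ Set.Icc a b \ ↑(∅ : Finset ℝ) → s.card = n + 1 →
      1 ≤ DD (fd 0) s := by
    intro s hs hcard
    have hs' : ↑s ⊆ Set.Icc a b := by
      intro x hx
      have := hs hx
      simpa using this
    obtain ⟨ξ, hξmem, hξ⟩ := DD_MVT hf hn hab s hs' hcard
    rw [hξ, le_div_iff₀ (by positivity : (0:ℝ) < (n ! : ℝ))]
    have := hderiv ξ hξmem
    linarith
  obtain ⟨W, hWm, hWd, hW⟩ := squeeze_core hab n ∅ (fd 0) hDDf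
  have hW' : ∀ x ∈ Set.Icc a b, (W.eval x) ^ 2 ≤ fd 0 x * W.eval x := by
    intro x hx
    apply hW
    simpa using hx
  -- pointwise |W| ≤ |fd 0|
  have habs : ∀ x ∈ Set.Icc a b, |W.eval x| ≤ |fd 0 x| := by
    intro x hx
    have h := hW' x hx
    rcases eq_or_ne (W.eval x) 0 with h0 | h0
    · simp [h0]
    · have h2 : (W.eval x) ^ 2 ≤ |fd 0 x| * |W.eval x| := by
        calc (W.eval x) ^ 2 ≤ fd 0 x * W.eval x := h
        _ ≤ |fd 0 x * W.eval x| := le_abs_self _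
        _ = |fd 0 x| * |W.eval x| := abs_mul _ _
      have habsW : 0 < |W.eval x| := abs_pos.mpr h0
      nlinarith [sq_abs (W.eval x)]
  -- integral comparison
  have hcf : ContinuousOn (fun t => |fd 0 t| ^ p) (Set.Icc a b) := by
    apply ContinuousOn.rpow_const hfcont.abs
    intro x _
    exact Or.inr hp.le
  have hcW : ContinuousOn (fun t => |W.eval t| ^ p) (Set.Icc a b) := by
    apply ContinuousOn.rpow_const
    · exact (Polynomial.continuous W).abs.continuousOn
    · intro x _
      exact Or.inr hp.le
  have hif : IntervalIntegrable (fun t => |fd 0 t| ^ p) volume a b := by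
    apply ContinuousOn.intervalIntegrable
    rwa [Set.uIcc_of_le hab.le]
  have hiW : IntervalIntegrable (fun t => |W.eval t| ^ p) volume a b := by
    apply ContinuousOn.intervalIntegrable
    rwa [Set.uIcc_of_le hab.le]
  set If : ℝ := ∫ t in a..b, |fd 0 t| ^ p with hIf
  set IW : ℝ := ∫ t in a..b, |W.eval t| ^ p with hIW
  have h1 : IW ≤ If := by
    apply intervalIntegral.integral_mono_on hab.le hiW hif
    intro x hx
    exact Real.rpow_le_rpow (abs_nonneg _) (habs x hx) hp.le
  have hIfnn : 0 ≤ If := intervalIntegral.integral_nonneg hab.le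
    (fun u _ => Real.rpow_nonneg (abs_nonneg _) p)
  have hIWnn : 0 ≤ IW := intervalIntegral.integral_nonneg hab.le
    (fun u _ => Real.rpow_nonneg (abs_nonneg _) p)
  -- hnorm gives If ≤ IW
  have hbdd : BddBelow { c | ∃ Q : Polynomial ℝ, Q.Monic ∧ Q.natDegree = n ∧
      c = Lp p a b (fun x => Q.eval x) } := by
    refine ⟨0, ?_⟩
    rintro c ⟨Q, _, _, rfl⟩
    apply Real.rpow_nonneg
    exact intervalIntegral.integral_nonneg hab.le
      (fun u _ => Real.rpow_nonneg (abs_nonneg _) p)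
  have hmem : Lp p a b (fun x => W.eval x) ∈ { c | ∃ Q : Polynomial ℝ, Q.Monic ∧
      Q.natDegree = n ∧ c = Lp p a b (fun x => Q.eval x) } := ⟨W, hWm, hWd, rfl⟩
  have h2 : Lp p a b (fd 0) ≤ Lp p a b (fun x => W.eval x) := by
    rw [hnorm]
    exact csInf_le hbdd hmem
  have h3 : If ≤ IW := by
    by_contra hcon
    push_neg at hcon
    have := Real.rpow_lt_rpow hIWnn hcon (by positivity : (0:ℝ) < 1 / p)
    unfold _root_.Lp at h2
    exact absurd h2 (not_le.mpr this)
  have hIeq : If = IW := le_antisymm h3 h1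
  -- pointwise equality of absolute values
  have hptzero : ∀ x ∈ Set.Icc a b, |fd 0 x| ^ p - |W.eval x| ^ p = 0 := by
    apply eq_zero_of_integral_zero hab (hcf.sub hcW)
    · intro x hx
      have := Real.rpow_le_rpow (abs_nonneg _) (habs x hx) hp.le
      simp only [Pi.sub_apply]
      linarith
    · simp only [Pi.sub_apply]
      rw [intervalIntegral.integral_sub hif hiW]
      rw [← hIf, ← hIW]
      linarith
  have habs_eq : ∀ x ∈ Set.Icc a b, |fd 0 x| = |W.eval x| := by
    intro x hx
    by_contra hne
    have hlt : |W.eval x| < |fd 0 x| := lt_of_le_of_ne (habs x hx) (fun h => hne h.symm)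
    have := Real.rpow_lt_rpow (abs_nonneg _) hlt hp
    have h := hptzero x hx
    linarith
  refine ⟨W, hWm, hWd, ?_⟩
  intro x hx
  have hq := hW' x hx
  have heq := habs_eq x hx
  have hsq : (fd 0 x) ^ 2 = (W.eval x) ^ 2 := by
    rw [← sq_abs, ← sq_abs (W.eval x), heq]
  have h4 : (fd 0 x - W.eval x) ^ 2 ≤ 0 := by nlinarith
  have h5 : (fd 0 x - W.eval x) ^ 2 = 0 := le_antisymm h4 (sq_nonneg _)
  have := pow_eq_zero_iff (n := 2) (by norm_num) |>.mp h5
  linarith [this]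
end

section
/- Let n ≥ 1 be an integer, let a < b be real numbers, and let 0 < p ≤ ∞. Then there exists a monic real polynomial Q of degree n, all of whose roots are real and lie in [a,b], such that ‖Q‖_{p,[a,b]} = D**(n,p,[a,b]); that is, the infimum defining D**(n,p,[a,b]) is attained by a monic polynomial with all its roots in [a,b]. -/
open Set Polynomial Nat MeasureTheory ENNReal

/-! ### Auxiliary lemmas -/

lemma clamp_mem {a b : ℝ} (hab : a ≤ b) (c : ℝ) : max a (min b c) ∈ Set.Icc a b :=
  ⟨le_max_left _ _, max_le hab (min_le_left _ _)⟩

lemma clamp_dist {a b x c : ℝ} (hab : a ≤ b) (hx : x ∈ Set.Icc a b) :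
    |x - max a (min b c)| ≤ |x - c| := by
  obtain ⟨hxa, hxb⟩ := hx
  rcases le_total c a with h1 | h1
  · rw [min_eq_right (h1.trans hab), max_eq_left h1,
      abs_of_nonneg (by linarith), abs_of_nonneg (by linarith)]
    linarith
  · rcases le_total b c with h2 | h2
    · rw [min_eq_left h2, max_eq_right hab,
        abs_of_nonpos (by linarith), abs_of_nonpos (by linarith)]
      linarith
    · rw [min_eq_right h2, max_eq_right h1]

lemma multiset_prod_map_le {α : Type*} {s : Multiset α} {f g : α → ℝ}
    (h0 : ∀ z ∈ s, 0 ≤ f z) (h : ∀ z ∈ s, f z ≤ g z) :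
    (s.map f).prod ≤ (s.map g).prod := by
  induction s using Multiset.induction_on with
  | empty => simp
  | cons z s ih =>
    simp only [Multiset.map_cons, Multiset.prod_cons]
    have hf0 : ∀ w ∈ s, 0 ≤ f w := fun w hw => h0 w (Multiset.mem_cons_of_mem hw)
    have hprod : 0 ≤ (s.map f).prod :=
      Multiset.prod_nonneg (by
        intro x hx; obtain ⟨w, hw, rfl⟩ := Multiset.mem_map.mp hx; exact hf0 w hw)
    exact mul_le_mul (h z (Multiset.mem_cons_self _ _))
      (ih hf0 (fun w hw => h w (Multiset.mem_cons_of_mem hw))) hprod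
      (le_trans (h0 z (Multiset.mem_cons_self _ _)) (h z (Multiset.mem_cons_self _ _)))

/-- Any monic polynomial dominates (on `[a,b]`) a product of linear factors with
roots in `[a,b]`, obtained by projecting the real parts of its complex roots. -/
lemma lemA {n : ℕ} {a b : ℝ} (hab : a ≤ b) (Q : Polynomial ℝ) (hm : Q.Monic)
    (hd : Q.natDegree = n) :
    ∃ r : Fin n → ℝ, (∀ i, r i ∈ Set.Icc a b) ∧
      ∀ x ∈ Set.Icc a b, ∏ i, |x - r i| ≤ |Q.eval x| := by
  set Qc : Polynomial ℂ := Q.map (algebraMap ℝ ℂ) with hQc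
  have hQcm : Qc.Monic := hm.map _
  have hsplit : Splits Qc := IsAlgClosed.splits Qc
  have hcard : Qc.roots.card = n := by
    rw [(Polynomial.splits_iff_card_roots).mp hsplit, hQc, hm.natDegree_map, hd]
  set M : Multiset ℝ := Qc.roots.map (fun z => max a (min b z.re)) with hM
  set l : List ℝ := M.toList with hl
  have hlen : l.length = n := by simp [hl, hM, hcard]
  refine ⟨fun i => l.get (Fin.cast hlen.symm i), ?_, ?_⟩
  · intro i
    have h1 : l.get (Fin.cast hlen.symm i) ∈ l :=
      List.mem_iff_get.mpr ⟨Fin.cast hlen.symm i, rfl⟩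
    have hmem : l.get (Fin.cast hlen.symm i) ∈ M := Multiset.mem_toList.mp h1
    obtain ⟨z, _, hz⟩ := Multiset.mem_map.mp hmem
    simp only
    rw [← hz]
    exact clamp_mem hab _
  · intro x hx
    have e0 : (M.map (fun t => |x - t|)).prod = (l.map (fun t => |x - t|)).prod := by
      calc (M.map (fun t => |x - t|)).prod
          = ((↑M.toList : Multiset ℝ).map (fun t => |x - t|)).prod := by
            rw [Multiset.coe_toList]
        _ = (M.toList.map (fun t => |x - t|)).prod := by
            rw [Multiset.map_coe, Multiset.prod_coe]
    have e0' : (l.map (fun t => |x - t|)).prod =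
        ∏ j : Fin l.length, ((fun t => |x - t|) ∘ l.get) j := by
      conv_lhs => rw [← List.ofFn_get l, List.map_ofFn, List.prod_ofFn]
    have e1 : ∏ i : Fin n, |x - l.get (Fin.cast hlen.symm i)| =
        (M.map (fun t => |x - t|)).prod := by
      rw [e0, e0']
      exact Fintype.prod_equiv (finCongr hlen.symm) _ _ (fun i => rfl)
    simp only
    rw [e1, hM, Multiset.map_map]
    have e2 : (Qc.roots.map ((fun t => |x - t|) ∘ fun z => max a (min b z.re))).prod ≤
        (Qc.roots.map (fun z => (normHom : ℂ →*₀ ℝ) (↑x - z))).prod := by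
      apply multiset_prod_map_le
      · intro z _; exact abs_nonneg _
      · intro z _
        refine le_trans (clamp_dist hab hx) ?_
        calc |x - z.re| = |((↑x - z).re)| := by simp
          _ ≤ (normHom : ℂ →*₀ ℝ) (↑x - z) := Complex.abs_re_le_norm _
    refine le_trans e2 ?_
    have e3 : (Qc.roots.map (fun z => (normHom : ℂ →*₀ ℝ) (↑x - z))).prod =
        (normHom : ℂ →*₀ ℝ) (Qc.eval ↑x) := by
      conv_lhs => rw [show (fun z => (normHom : ℂ →*₀ ℝ) (↑x - z)) =
        (normHom : ℂ →*₀ ℝ) ∘ (fun z => (↑x - z)) from rfl, ← Multiset.map_map]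
      rw [← map_multiset_prod]
      congr 1
      conv_rhs => rw [hsplit.eq_prod_roots_of_monic hQcm]
      rw [Polynomial.eval_multiset_prod, Multiset.map_map]
      simp
    rw [e3]
    have e4 : Qc.eval ↑x = ((Q.eval x : ℝ) : ℂ) := by
      rw [hQc, Polynomial.eval_map]
      exact (Polynomial.eval₂_at_apply _ x).trans rfl
    rw [e4]; exact ((Complex.norm_real _).trans (Real.norm_eq_abs _)).le

lemma pnorm_mono (p : ℝ≥0∞) {a b : ℝ} (hab : a ≤ b) {f g : ℝ → ℝ}
    (hf : Continuous f) (hg : Continuous g) (h : ∀ x ∈ Set.Icc a b, |f x| ≤ |g x|) :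
    pnorm p a b f ≤ pnorm p a b g := by
  by_cases hp : p = ⊤
  · simp only [pnorm, if_pos hp, Lsup]
    have hbdd : BddAbove ((fun t => |g t|) '' Set.Icc a b) :=
      IsCompact.bddAbove_image isCompact_Icc (hg.abs.continuousOn)
    apply Real.sSup_le
    · rintro y ⟨t, ht, rfl⟩
      exact le_trans (h t ht) (le_csSup hbdd ⟨t, ht, rfl⟩)
    · apply Real.sSup_nonneg
      rintro y ⟨t, ht, rfl⟩; exact abs_nonneg _
  · simp only [pnorm, if_neg hp, _root_.Lp]
    set q := p.toReal with hq
    have hq0 : 0 ≤ q := ENNReal.toReal_nonneg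
    have intf : IntervalIntegrable (fun t => |f t| ^ q) volume a b :=
      ((hf.abs).rpow_const (fun x => Or.inr hq0)).intervalIntegrable _ _
    have intg : IntervalIntegrable (fun t => |g t| ^ q) volume a b :=
      ((hg.abs).rpow_const (fun x => Or.inr hq0)).intervalIntegrable _ _
    apply Real.rpow_le_rpow
    · apply intervalIntegral.integral_nonneg hab
      intro t _; exact Real.rpow_nonneg (abs_nonneg _) _
    · exact intervalIntegral.integral_mono_on hab intf intg
        (fun t ht => Real.rpow_le_rpow (abs_nonneg _) (h t ht) hq0)
    · positivity

lemma pnorm_nonneg (p : ℝ≥0∞) {a b : ℝ} (hab : a ≤ b) {f : ℝ → ℝ} :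
    0 ≤ pnorm p a b f := by
  by_cases hp : p = ⊤
  · simp only [pnorm, if_pos hp, Lsup]
    apply Real.sSup_nonneg
    rintro y ⟨t, ht, rfl⟩; exact abs_nonneg _
  · simp only [pnorm, if_neg hp, _root_.Lp]
    apply Real.rpow_nonneg
    apply intervalIntegral.integral_nonneg hab
    intro t _; exact Real.rpow_nonneg (abs_nonneg _) _

lemma cont_prod (n : ℕ) : Continuous fun q : (Fin n → ℝ) × ℝ => ∏ i, (q.2 - q.1 i) := by
  apply continuous_finset_prod
  intro i _
  exact continuous_snd.sub ((continuous_apply i).comp continuous_fst)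

set_option maxHeartbeats 1000000 in
lemma contFin (n : ℕ) (pp a b : ℝ) (hpp : 0 ≤ pp) :
    Continuous fun r : Fin n → ℝ => Lp pp a b (fun x => ∏ i, (x - r i)) := by
  have hu : Continuous
      (Function.uncurry fun (r : Fin n → ℝ) (t : ℝ) => |∏ i, (t - r i)| ^ pp) := by
    have h := ((cont_prod n).abs).rpow_const (fun x => Or.inr hpp)
    exact h
  have h1 : Continuous fun r : Fin n → ℝ => ∫ t in a..b, |∏ i, (t - r i)| ^ pp :=
    intervalIntegral.continuous_parametric_intervalIntegral_of_continuous' hu a b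
  exact h1.rpow_const (fun x => Or.inr (by positivity))

lemma contInf (n : ℕ) (a b : ℝ) (hab : a ≤ b) :
    Continuous fun r : Fin n → ℝ => Lsup a b (fun x => ∏ i, (x - r i)) := by
  haveI : Nonempty (Set.Icc a b) := (Set.nonempty_Icc.mpr hab).to_subtype
  set Fc : C((Fin n → ℝ) × (Set.Icc a b), ℝ) :=
    ⟨fun q => ∏ i, ((q.2 : ℝ) - q.1 i), by
      exact (cont_prod n).comp
        (continuous_fst.prodMk (continuous_subtype_val.comp continuous_snd))⟩ with hFc
  have key : ∀ r : Fin n → ℝ, Lsup a b (fun x => ∏ i, (x - r i)) = ‖Fc.curry r‖ := by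
    intro r
    rw [ContinuousMap.norm_eq_iSup_norm]
    have : Lsup a b (fun x => ∏ i, (x - r i)) = ⨆ x : Set.Icc a b, |∏ i, ((x:ℝ) - r i)| := by
      rw [Lsup, Set.image_eq_range]; rfl
    rw [this]
    congr 1
  simp only [key]
  exact continuous_norm.comp Fc.curry.continuous

set_option maxHeartbeats 1000000 in
/-- For `0 < p ≤ ∞`, the infimum `D**(n,p,[a,b])` is attained by a monic polynomial of degree `n`
with all of its roots in `[a,b]`. -/
theorem stmt5 (n : ℕ) (hn : 1 ≤ n) (a b : ℝ) (hab : a < b) (p : ℝ≥0∞) (hp : 0 < p) :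
    ∃ r : Fin n → ℝ, (∀ i, r i ∈ Set.Icc a b) ∧
      pnorm p a b (fun x => ∏ i, (x - r i)) =
        sInf { c | ∃ Q : Polynomial ℝ, Q.Monic ∧ Q.natDegree = n ∧
          c = pnorm p a b (fun x => Q.eval x) } := by
  have hab' : a ≤ b := hab.le
  set F : (Fin n → ℝ) → ℝ := fun r => pnorm p a b (fun x => ∏ i, (x - r i)) with hF
  have hFcont : Continuous F := by
    rw [hF]
    by_cases hp' : p = ⊤
    · simp only [pnorm, if_pos hp']
      exact contInf n a b hab'
    · simp only [pnorm, if_neg hp']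
      exact contFin n p.toReal a b ENNReal.toReal_nonneg
  set K : Set (Fin n → ℝ) := Set.univ.pi (fun _ => Set.Icc a b) with hK
  have hKc : IsCompact K := isCompact_univ_pi (fun _ => isCompact_Icc)
  have hKne : K.Nonempty := ⟨fun _ => a, fun i _ => ⟨le_refl a, hab'⟩⟩
  obtain ⟨r₀, hr₀K, hmin⟩ := hKc.exists_isMinOn hKne hFcont.continuousOn
  refine ⟨r₀, fun i => hr₀K i (Set.mem_univ i), ?_⟩
  have hcontprod : ∀ r : Fin n → ℝ, Continuous fun x : ℝ => ∏ i, (x - r i) := by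
    intro r
    exact continuous_finset_prod _ (fun i _ => continuous_id.sub continuous_const)
  apply le_antisymm
  · -- F r₀ ≤ sInf S
    apply le_csInf
    · exact ⟨pnorm p a b (fun x => ((X : Polynomial ℝ)^n).eval x), X^n,
        monic_X_pow n, natDegree_X_pow n, rfl⟩
    · rintro c ⟨Q, hQm, hQd, rfl⟩
      obtain ⟨r, hrI, hrle⟩ := lemA hab' Q hQm hQd
      have hrK : r ∈ K := fun i _ => hrI i
      refine le_trans (hmin hrK) ?_
      apply pnorm_mono p hab' (hcontprod r) Q.continuous
      intro x hx
      rw [Finset.abs_prod]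
      exact hrle x hx
  · -- sInf S ≤ F r₀
    apply csInf_le
    · exact ⟨0, by rintro c ⟨Q, _, _, rfl⟩; exact pnorm_nonneg p hab'⟩
    · refine ⟨∏ i, (X - C (r₀ i)), monic_prod_of_monic _ _ (fun i _ => monic_X_sub_C _), ?_, ?_⟩
      · rw [Polynomial.natDegree_prod _ _ (fun i _ => X_sub_C_ne_zero (r₀ i))]
        simp
      · have he : (fun x => Polynomial.eval x (∏ i, (X - C (r₀ i)))) =
            fun x : ℝ => ∏ i, (x - r₀ i) := by
          funext x; rw [eval_prod]; simp
        rw [he]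
end

section
/- Let 0 < p < ∞. Then C(1,p) = 2(p+1)^{1/p}; that is, every f ∈ 𝒟¹([0,1]) that is not identically zero satisfies inf_{0<t<1} |f′(t)| ≤ 2(p+1)^{1/p} · (∫_0^1 |f(t)|^p dt)^{1/p}, and 2(p+1)^{1/p} is the smallest constant with this property. -/
open Set Polynomial Nat MeasureTheory ENNReal

lemma integ_abs_rpow {p c : ℝ} (hp : 0 < p) (hc0 : 0 ≤ c) (hc1 : c ≤ 1) :
    ∫ t in (0:ℝ)..1, |t - c| ^ p = (c ^ (p+1) + (1-c) ^ (p+1)) / (p+1) := by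
  have hcont : Continuous fun t : ℝ => |t - c| ^ p :=
    (Real.continuous_rpow_const hp.le).comp ((continuous_id.sub continuous_const).abs)
  have hsplit : ∫ t in (0:ℝ)..1, |t - c| ^ p
      = (∫ t in (0:ℝ)..c, |t - c| ^ p) + ∫ t in c..1, |t - c| ^ p :=
    (intervalIntegral.integral_add_adjacent_intervals (hcont.intervalIntegrable _ _)
      (hcont.intervalIntegrable _ _)).symm
  have h1 : ∫ t in (0:ℝ)..c, |t - c| ^ p = c ^ (p+1) / (p+1) := by
    have e : ∫ t in (0:ℝ)..c, |t - c| ^ p = ∫ t in (0:ℝ)..c, (c - t) ^ p := by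
      apply intervalIntegral.integral_congr
      intro t ht
      rw [Set.uIcc_of_le hc0] at ht
      show |t - c| ^ p = (c - t) ^ p
      rw [abs_sub_comm, abs_of_nonneg (by linarith [ht.2])]
    rw [e, intervalIntegral.integral_comp_sub_left (fun u => u ^ p) c, sub_self, sub_zero,
      integral_rpow (Or.inl (by linarith)), Real.zero_rpow (by positivity), sub_zero]
  have h2 : ∫ t in c..1, |t - c| ^ p = (1-c) ^ (p+1) / (p+1) := by
    have e : ∫ t in c..1, |t - c| ^ p = ∫ t in c..1, (t - c) ^ p := by
      apply intervalIntegral.integral_congr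
      intro t ht
      rw [Set.uIcc_of_le hc1] at ht
      show |t - c| ^ p = (t - c) ^ p
      rw [abs_of_nonneg (by linarith [ht.1])]
    rw [e, intervalIntegral.integral_comp_sub_right (fun u => u ^ p) c, sub_self,
      integral_rpow (Or.inl (by linarith)), Real.zero_rpow (by positivity), sub_zero]
  rw [hsplit, h1, h2]; ring

lemma convex_bound {p c : ℝ} (hp : 0 < p) (hc0 : 0 ≤ c) (hc1 : c ≤ 1) :
    (2:ℝ)⁻¹ ^ p ≤ c ^ (p+1) + (1-c) ^ (p+1) := by
  have h := (convexOn_rpow (by linarith : (1:ℝ) ≤ p+1)).2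
    (Set.mem_Ici.2 hc0) (Set.mem_Ici.2 (by linarith : (0:ℝ) ≤ 1-c))
    (by norm_num : (0:ℝ) ≤ 1/2) (by norm_num : (0:ℝ) ≤ 1/2) (by norm_num)
  simp only [smul_eq_mul] at h
  have e : (1/2*c + 1/2*(1-c) : ℝ) = 2⁻¹ := by ring
  rw [e] at h
  have e2 : (2:ℝ)⁻¹ ^ (p+1) = 2⁻¹ ^ p * 2⁻¹ := by
    rw [Real.rpow_add (by norm_num) p 1, Real.rpow_one]
  rw [e2] at h
  linarith


lemma keyA {f f' : ℝ → ℝ} {m : ℝ} (hm : 0 ≤ m)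
    (hfc : ContinuousOn f (Set.Icc 0 1))
    (hder : ∀ x ∈ Set.Ioo (0:ℝ) 1, HasDerivAt f (f' x) x)
    (hlow : ∀ x ∈ Set.Ioo (0:ℝ) 1, m ≤ f' x) :
    ∃ c ∈ Set.Icc (0:ℝ) 1, ∀ t ∈ Set.Icc (0:ℝ) 1, m * |t - c| ≤ |f t| := by
  have slope : ∀ s t : ℝ, 0 ≤ s → t ≤ 1 → s < t → m * (t - s) ≤ f t - f s := by
    intro s t hs ht hst
    obtain ⟨ξ, hξ, hξ'⟩ := exists_hasDerivAt_eq_slope f f' hst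
      (hfc.mono (Set.Icc_subset_Icc hs ht))
      (fun x hx => hder x ⟨lt_of_le_of_lt hs hx.1, lt_of_lt_of_le hx.2 ht⟩)
    have hmem : ξ ∈ Set.Ioo (0:ℝ) 1 := ⟨lt_of_le_of_lt hs hξ.1, lt_of_lt_of_le hξ.2 ht⟩
    have h1 : m ≤ (f t - f s) / (t - s) := hξ' ▸ hlow ξ hmem
    have h2 : (0:ℝ) < t - s := sub_pos.2 hst
    calc m * (t - s) ≤ ((f t - f s) / (t - s)) * (t - s) :=
          mul_le_mul_of_nonneg_right h1 h2.le
      _ = f t - f s := div_mul_cancel₀ _ h2.ne'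
  by_cases h0 : 0 ≤ f 0
  · refine ⟨0, ⟨le_refl 0, zero_le_one⟩, fun t ht => ?_⟩
    rcases eq_or_lt_of_le ht.1 with h | h
    · simp [← h]
    · have hs := slope 0 t le_rfl ht.2 h
      have : m * (t - 0) ≤ f t := by linarith
      rw [sub_zero] at this ⊢
      rw [abs_of_nonneg ht.1]
      exact this.trans (le_abs_self _)
  · push_neg at h0
    by_cases h1 : f 1 ≤ 0
    · refine ⟨1, ⟨zero_le_one, le_refl 1⟩, fun t ht => ?_⟩
      rcases eq_or_lt_of_le ht.2 with h | h
      · simp [h]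
      · have hs := slope t 1 ht.1 le_rfl h
        have : m * (1 - t) ≤ -f t := by linarith
        rw [abs_sub_comm, abs_of_nonneg (by linarith [ht.2] : (0:ℝ) ≤ 1 - t)]
        exact this.trans (neg_le_abs _)
    · push_neg at h1
      have h0m : (0:ℝ) ∈ Set.Icc (f 0) (f 1) := ⟨h0.le, h1.le⟩
      obtain ⟨c, hc, hfc0⟩ := intermediate_value_Icc zero_le_one hfc h0m
      refine ⟨c, hc, fun t ht => ?_⟩
      rcases lt_trichotomy t c with h | h | h
      · have hs := slope t c ht.1 hc.2 h
        have : m * (c - t) ≤ -f t := by linarith [hfc0 ▸ hs]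
        rw [abs_sub_comm, abs_of_nonneg (by linarith : (0:ℝ) ≤ c - t)]
        exact this.trans (neg_le_abs _)
      · simp [h]
      · have hs := slope c t hc.1 ht.2 h
        have : m * (t - c) ≤ f t := by linarith [hfc0 ▸ hs]
        rw [abs_of_nonneg (by linarith : (0:ℝ) ≤ t - c)]
        exact this.trans (le_abs_self _)

lemma keyB {f f' : ℝ → ℝ} {m : ℝ} (hm : 0 < m)
    (hder : ∀ x ∈ Set.Ioo (0:ℝ) 1, HasDerivAt f (f' x) x)
    (habs : ∀ x ∈ Set.Ioo (0:ℝ) 1, m ≤ |f' x|) :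
    (∀ x ∈ Set.Ioo (0:ℝ) 1, m ≤ f' x) ∨ (∀ x ∈ Set.Ioo (0:ℝ) 1, m ≤ -f' x) := by
  have hdic : ∀ x ∈ Set.Ioo (0:ℝ) 1, m ≤ f' x ∨ m ≤ -f' x := by
    intro x hx
    rcases abs_cases (f' x) with ⟨h, _⟩ | ⟨h, _⟩
    · left; linarith [habs x hx]
    · right; linarith [habs x hx]
  by_contra hc
  push_neg at hc
  obtain ⟨⟨s, hs, hs'⟩, ⟨t, ht, ht'⟩⟩ := hc
  have hfs : f' s < 0 := by
    rcases hdic s hs with h | h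
    · linarith
    · linarith
  have hft : 0 < f' t := by
    rcases hdic t ht with h | h
    · linarith
    · linarith
  have hne : s ≠ t := fun h => by rw [h] at hfs; linarith
  have hsub : Set.Icc (min s t) (max s t) ⊆ Set.Ioo (0:ℝ) 1 := by
    intro x hx
    constructor
    · calc (0:ℝ) < min s t := lt_min hs.1 ht.1
        _ ≤ x := hx.1
    · calc x ≤ max s t := hx.2
        _ < 1 := max_lt hs.2 ht.2
  have hderW : ∀ x ∈ Set.Icc (min s t) (max s t),
      HasDerivWithinAt f (f' x) (Set.Icc (min s t) (max s t)) x :=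
    fun x hx => (hder x (hsub hx)).hasDerivWithinAt
  have hzero : (0:ℝ) ∈ f' '' Set.Ioo (min s t) (max s t) := by
    rcases hne.lt_or_gt with h | h
    · have e1 : min s t = s := min_eq_left h.le
      have e2 : max s t = t := max_eq_right h.le
      rw [e1, e2] at hderW ⊢
      exact exists_hasDerivWithinAt_eq_of_gt_of_lt h.le hderW hfs hft
    · have e1 : min s t = t := min_eq_right h.le
      have e2 : max s t = s := max_eq_left h.le
      rw [e1, e2] at hderW ⊢
      exact exists_hasDerivWithinAt_eq_of_lt_of_gt h.le hderW hft hfs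
  obtain ⟨ξ, hξ, hξ0⟩ := hzero
  have := habs ξ (hsub (Set.Ioo_subset_Icc_self hξ))
  rw [hξ0] at this
  simp at this
  linarith

lemma integ_lower {p m : ℝ} {f : ℝ → ℝ} (hp : 0 < p) (hm : 0 ≤ m)
    (hfc : ContinuousOn f (Set.Icc 0 1))
    (c : ℝ) (hc0 : 0 ≤ c) (hc1 : c ≤ 1)
    (hpt : ∀ t ∈ Set.Icc (0:ℝ) 1, m * |t - c| ≤ |f t|) :
    m ^ p * 2⁻¹ ^ p / (p+1) ≤ ∫ t in (0:ℝ)..1, |f t| ^ p := by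
  have hcont : Continuous fun t : ℝ => m ^ p * |t - c| ^ p :=
    continuous_const.mul
      ((Real.continuous_rpow_const hp.le).comp ((continuous_id.sub continuous_const).abs))
  have hintf : IntervalIntegrable (fun t => |f t| ^ p) volume 0 1 := by
    apply ContinuousOn.intervalIntegrable
    rw [Set.uIcc_of_le zero_le_one]
    exact hfc.abs.rpow_const (fun x _ => Or.inr hp.le)
  have hmono : ∫ t in (0:ℝ)..1, m ^ p * |t - c| ^ p ≤ ∫ t in (0:ℝ)..1, |f t| ^ p := by
    apply intervalIntegral.integral_mono_on zero_le_one (hcont.intervalIntegrable _ _) hintf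
    intro t ht
    calc m ^ p * |t - c| ^ p = (m * |t - c|) ^ p := (Real.mul_rpow hm (abs_nonneg _)).symm
      _ ≤ |f t| ^ p := Real.rpow_le_rpow (by positivity) (hpt t ht) hp.le
  have heval : ∫ t in (0:ℝ)..1, m ^ p * |t - c| ^ p
      = m ^ p * ((c ^ (p+1) + (1-c) ^ (p+1)) / (p+1)) := by
    rw [intervalIntegral.integral_const_mul, integ_abs_rpow hp hc0 hc1]
  refine le_trans ?_ (heval ▸ hmono)
  have h := convex_bound (c := c) hp hc0 hc1
  have hmp : (0:ℝ) ≤ m ^ p := Real.rpow_nonneg hm p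
  calc m ^ p * 2⁻¹ ^ p / (p+1) ≤ m ^ p * (c ^ (p+1) + (1-c) ^ (p+1)) / (p+1) := by
        gcongr
    _ = m ^ p * ((c ^ (p+1) + (1-c) ^ (p+1)) / (p+1)) := by ring

lemma upper {p : ℝ} (hp : 0 < p) (fd : ℕ → ℝ → ℝ) (h : IsDn 1 0 1 fd) :
    mIoo 1 0 1 fd ≤ 2 * (p + 1) ^ (1 / p) * Lp p 0 1 (fd 0) := by
  obtain ⟨-, hfc', hder'⟩ := h
  have hfc : ContinuousOn (fd 0) (Set.Icc 0 1) := hfc'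
  have hder : ∀ x ∈ Set.Ioo (0:ℝ) 1, HasDerivAt (fd 0) (fd 1 x) x := hder'
  have hInonneg : 0 ≤ ∫ t in (0:ℝ)..1, |fd 0 t| ^ p :=
    intervalIntegral.integral_nonneg zero_le_one (fun t _ => Real.rpow_nonneg (abs_nonneg _) _)
  have hLnonneg : 0 ≤ Lp p 0 1 (fd 0) := Real.rpow_nonneg hInonneg _
  by_cases hm0 : mIoo 1 0 1 fd ≤ 0
  · exact hm0.trans (by positivity)
  push_neg at hm0
  set m := mIoo 1 0 1 fd with hmdef
  have habs : ∀ x ∈ Set.Ioo (0:ℝ) 1, m ≤ |fd 1 x| := by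
    intro x hx
    refine csInf_le ⟨0, ?_⟩ (Set.mem_image_of_mem _ hx)
    rintro y ⟨t, -, rfl⟩
    exact abs_nonneg _
  have hsign := keyB hm0 hder habs
  obtain ⟨c, ⟨hc0, hc1⟩, hpt⟩ :
      ∃ c ∈ Set.Icc (0:ℝ) 1, ∀ t ∈ Set.Icc (0:ℝ) 1, m * |t - c| ≤ |fd 0 t| := by
    rcases hsign with hs | hs
    · exact keyA hm0.le hfc hder hs
    · obtain ⟨c, hc, hpt⟩ := keyA (f := fun t => -(fd 0 t)) (f' := fun t => -(fd 1 t)) hm0.le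
        hfc.neg (fun x hx => (hder x hx).neg) hs
      exact ⟨c, hc, fun t ht => by simpa [abs_neg] using hpt t ht⟩
  have hint := integ_lower hp hm0.le hfc c hc0 hc1 hpt
  rw [← Real.rpow_le_rpow_iff hm0.le (by positivity) hp]
  have hexp : (2 * (p+1) ^ (1/p) * Lp p 0 1 (fd 0)) ^ p
      = 2 ^ p * (p+1) * (∫ t in (0:ℝ)..1, |fd 0 t| ^ p) := by
    rw [Real.mul_rpow (by positivity) hLnonneg, Real.mul_rpow (by norm_num) (by positivity),
      one_div, Real.rpow_inv_rpow (by linarith) hp.ne']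
    unfold _root_.Lp
    rw [one_div, Real.rpow_inv_rpow hInonneg hp.ne']
  rw [hexp]
  have h21 : (2:ℝ) ^ p * 2⁻¹ ^ p = 1 := by
    rw [← Real.mul_rpow (by norm_num) (by norm_num)]
    norm_num
  have e : 2 ^ p * (p+1) * (m ^ p * 2⁻¹ ^ p / (p+1)) = m ^ p := by
    calc 2 ^ p * (p+1) * (m ^ p * 2⁻¹ ^ p / (p+1))
        = (2 ^ p * 2⁻¹ ^ p) * m ^ p * ((p+1)/(p+1)) := by ring
      _ = m ^ p := by
          rw [h21, div_self (by linarith : (p+1:ℝ) ≠ 0)]; ring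
  rw [← e]
  exact mul_le_mul_of_nonneg_left hint (by positivity)

/-- `C(1,p) = 2(p+1)^{1/p}` for `0 < p < ∞`: every not-identically-zero `f ∈ 𝒟¹([0,1])`
satisfies `inf_{0<t<1} |f'(t)| ≤ 2(p+1)^{1/p} ‖f‖_p`, and this constant is smallest. -/
theorem stmt6 (p : ℝ) (hp : 0 < p) :
    (∀ fd : ℕ → ℝ → ℝ, IsDn 1 0 1 fd → (∃ x ∈ Set.Icc (0:ℝ) 1, fd 0 x ≠ 0) →
      mIoo 1 0 1 fd ≤ 2 * (p + 1) ^ (1 / p) * Lp p 0 1 (fd 0)) ∧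
    (∀ C : ℝ, (∀ fd : ℕ → ℝ → ℝ, IsDn 1 0 1 fd → (∃ x ∈ Set.Icc (0:ℝ) 1, fd 0 x ≠ 0) →
        mIoo 1 0 1 fd ≤ C * Lp p 0 1 (fd 0)) →
      2 * (p + 1) ^ (1 / p) ≤ C) := by
  constructor
  · intro fd h _
    exact upper hp fd h
  · intro C h
    set fd : ℕ → ℝ → ℝ := fun k t => if k = 0 then t - 2⁻¹ else 1 with hfd
    have e0 : fd 0 = fun t => t - 2⁻¹ := by funext t; simp [hfd]
    have hIs : IsDn 1 0 1 fd := by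
      refine ⟨fun k hk => absurd hk (by omega), ?_, ?_⟩
      · show ContinuousOn (fd 0) _
        rw [e0]
        exact (continuous_id.sub continuous_const).continuousOn
      · intro x hx
        show HasDerivAt (fd 0) (fd 1 x) x
        have e1 : fd 1 x = 1 := by simp [hfd]
        rw [e0, e1]
        exact (hasDerivAt_id x).sub_const _
    have hne : ∃ x ∈ Set.Icc (0:ℝ) 1, fd 0 x ≠ 0 :=
      ⟨0, ⟨le_refl 0, zero_le_one⟩, by norm_num [hfd]⟩
    have hmIoo : mIoo 1 0 1 fd = 1 := by
      unfold mIoo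
      have himg : (fun t => |fd 1 t|) '' Set.Ioo (0:ℝ) 1 = {1} := by
        rw [show (fun t => |fd 1 t|) = fun _ : ℝ => (1:ℝ) by funext t; simp [hfd]]
        exact Set.Nonempty.image_const (Set.nonempty_Ioo.2 zero_lt_one) 1
      rw [himg, csInf_singleton]
    have hLp : Lp p 0 1 (fd 0) = ((2:ℝ)⁻¹ ^ p / (p+1)) ^ (1/p) := by
      unfold _root_.Lp
      congr 1
      calc ∫ t in (0:ℝ)..1, |fd 0 t| ^ p = ∫ t in (0:ℝ)..1, |t - 2⁻¹| ^ p := by rw [e0]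
        _ = ((2⁻¹:ℝ) ^ (p+1) + (1 - 2⁻¹) ^ (p+1)) / (p+1) :=
            integ_abs_rpow hp (by norm_num) (by norm_num)
        _ = 2⁻¹ ^ p / (p+1) := by
            have e2 : (1 - 2⁻¹ : ℝ) = 2⁻¹ := by norm_num
            rw [e2, Real.rpow_add (by norm_num : (0:ℝ) < 2⁻¹) p 1, Real.rpow_one]
            ring
    have hspec := h fd hIs hne
    rw [hmIoo, hLp] at hspec
    have hne2 : ((p+1):ℝ) ^ (p⁻¹) ≠ 0 := by positivity
    have hv : (((2:ℝ)⁻¹ ^ p / (p+1)) ^ (1/p)) * (2 * (p+1) ^ (1/p)) = 1 := by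
      rw [one_div, Real.div_rpow (by positivity) (by linarith),
        Real.rpow_rpow_inv (by norm_num) hp.ne']
      field_simp
    calc 2 * (p+1) ^ (1/p) = 1 * (2 * (p+1) ^ (1/p)) := by ring
      _ ≤ (C * (((2:ℝ)⁻¹ ^ p / (p+1)) ^ (1/p))) * (2 * (p+1) ^ (1/p)) :=
          mul_le_mul_of_nonneg_right hspec (by positivity)
      _ = C * ((((2:ℝ)⁻¹ ^ p / (p+1)) ^ (1/p)) * (2 * (p+1) ^ (1/p))) := by ring
      _ = C := by rw [hv]; ring
end

section
/- Let n ≥ 1 be an integer, and let P be a monic real polynomial of degree n. Then max_{x∈[−1,1]} |P(x)| ≥ 2^{1−n}. -/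
open Set Polynomial Nat MeasureTheory ENNReal

lemma cheb_aux : ∀ m : ℕ, (Chebyshev.T ℝ m).natDegree ≤ m ∧ (Chebyshev.T ℝ m).coeff m = 2 ^ (m - 1)
  | 0 => by simp [Polynomial.Chebyshev.T_zero]
  | 1 => by simp [Polynomial.Chebyshev.T_one]
  | (m + 2) => by
    have ih1 := cheb_aux m
    have ih2 := cheb_aux (m + 1)
    have hrec : Chebyshev.T ℝ (m + 2 : ℕ) = 2 * X * Chebyshev.T ℝ (m + 1 : ℕ) - Chebyshev.T ℝ m := by
      push_cast
      exact Polynomial.Chebyshev.T_add_two ℝ m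
    constructor
    · rw [hrec]
      refine le_trans (natDegree_sub_le _ _) ?_
      simp only [sup_le_iff]
      refine ⟨le_trans (natDegree_mul_le) ?_, le_trans ih1.1 (by omega)⟩
      have : (2 * X : ℝ[X]).natDegree ≤ 1 := by
        refine le_trans (natDegree_mul_le) ?_
        simp
      omega
    · rw [hrec]
      have h0 : (Chebyshev.T ℝ m).coeff (m + 2) = 0 :=
        coeff_eq_zero_of_natDegree_lt (by omega)
      have : (2 * X * Chebyshev.T ℝ ((m+1:ℕ):ℤ) : ℝ[X]) = Polynomial.C 2 * (X * Chebyshev.T ℝ ((m+1:ℕ):ℤ)) := by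
        rw [mul_assoc]; congr 1
      rw [coeff_sub, this, coeff_C_mul, coeff_X_mul, ih2.2, h0]
      simp
      ring


open Real

/-- Every monic polynomial of degree `n ≥ 1` satisfies `max_{x ∈ [-1,1]} |P(x)| ≥ 2^{1-n}`. -/
theorem stmt7 (n : ℕ) (hn : 1 ≤ n) (P : Polynomial ℝ) (hP : P.Monic) (hdeg : P.natDegree = n) :
    (2:ℝ) ^ (1 - (n:ℤ)) ≤ sSup ((fun x => |P.eval x|) '' Set.Icc (-1:ℝ) 1) := by
  set c : ℝ := (2:ℝ) ^ (1 - (n:ℤ)) with hc_def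
  have hc : 0 < c := zpow_pos (by norm_num) _
  set M : ℝ := sSup ((fun x => |P.eval x|) '' Set.Icc (-1:ℝ) 1) with hM_def
  by_contra hlt
  push_neg at hlt
  have hn0 : (n:ℝ) ≠ 0 := by positivity
  have bdd : BddAbove ((fun x => |P.eval x|) '' Set.Icc (-1:ℝ) 1) :=
    (isCompact_Icc.image_of_continuousOn ((P.continuous_aeval.abs).continuousOn)).bddAbove
  have hle : ∀ y ∈ Set.Icc (-1:ℝ) 1, |P.eval y| ≤ M := fun y hy => le_csSup bdd ⟨y, hy, rfl⟩
  set R : ℝ[X] := P - Polynomial.C c * Chebyshev.T ℝ n with hR_def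
  -- coefficient arithmetic : c * 2^(n-1) = 1
  have hc1 : c * 2 ^ (n - 1) = 1 := by
    have : ((2:ℝ)) ^ (n - 1 : ℕ) = (2:ℝ) ^ ((n:ℤ) - 1) := by
      rw [← zpow_natCast]
      congr 1
      omega
    rw [hc_def, this, ← zpow_add₀ (by norm_num : (2:ℝ) ≠ 0)]
    norm_num
  have hRdeg : R.natDegree < n := by
    have hdlt : R.degree < (n : ℕ) := by
      rw [Polynomial.degree_lt_iff_coeff_zero]
      intro m hm
      rw [hR_def, coeff_sub, coeff_C_mul]
      rcases eq_or_lt_of_le (Nat.cast_le.mp hm) with h | h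
      · rw [← h, ← hdeg, hP.coeff_natDegree, hdeg, (cheb_aux n).2, hc1]
        ring
      · rw [coeff_eq_zero_of_natDegree_lt (by omega : P.natDegree < m),
          coeff_eq_zero_of_natDegree_lt (lt_of_le_of_lt (cheb_aux n).1 h)]
        ring
    rcases eq_or_ne R 0 with h | h
    · rw [h]; simp; omega
    · exact (Polynomial.natDegree_lt_iff_degree_lt h).mpr hdlt
  -- the nodes
  set y : ℕ → ℝ := fun k => Real.cos (((n - k : ℕ):ℝ) * π / n) with hy_def
  have hymem : ∀ k, ((n - k : ℕ):ℝ) * π / n ∈ Set.Icc 0 π := by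
    intro k
    constructor
    · positivity
    · rw [div_le_iff₀ (by positivity)]
      have : ((n - k : ℕ):ℝ) ≤ n := by exact_mod_cast Nat.sub_le n k
      nlinarith [pi_pos]
  have hmono : ∀ k l, k < l → l ≤ n → y k < y l := by
    intro k l hkl hln
    apply Real.strictAntiOn_cos (hymem l) (hymem k)
    have h1 : ((n-l:ℕ):ℝ) < ((n-k:ℕ):ℝ) := by exact_mod_cast (by omega : n-l < n-k)
    gcongr
  have hyIcc : ∀ k, y k ∈ Set.Icc (-1:ℝ) 1 := fun k => ⟨Real.neg_one_le_cos _, Real.cos_le_one _⟩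
  -- evaluation of T at nodes
  have hT : ∀ k, k ≤ n → (Chebyshev.T ℝ n).eval (y k) = (-1:ℝ) ^ (n - k) := by
    intro k hk
    rw [hy_def]
    simp only [Polynomial.Chebyshev.T_real_cos]
    have : ((n:ℤ):ℝ) * (((n - k : ℕ):ℝ) * π / n) = ((n-k:ℕ):ℝ) * π - 0 := by
      push_cast
      field_simp
      ring
    rw [this, Real.cos_nat_mul_pi_sub]
    simp
  -- sign alternation
  have hsign : ∀ k, k ≤ n → R.eval (y k) * (-1:ℝ) ^ (n - k) < 0 := by
    intro k hk
    have h1 : |P.eval (y k)| ≤ M := hle _ (hyIcc k)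
    have h2 : R.eval (y k) = P.eval (y k) - c * (-1:ℝ) ^ (n-k) := by
      rw [hR_def]; simp [hT k hk]
    have hs : ((-1:ℝ) ^ (n-k)) ^ 2 = 1 := by
      rw [← pow_mul, mul_comm, pow_mul]; norm_num
    have habs : |(-1:ℝ) ^ (n-k)| = 1 := by
      rw [abs_pow]; norm_num
    have h3 : P.eval (y k) * (-1:ℝ) ^ (n-k) ≤ |P.eval (y k)| := by
      calc P.eval (y k) * (-1:ℝ) ^ (n-k) ≤ |P.eval (y k) * (-1:ℝ) ^ (n-k)| := le_abs_self _
        _ = |P.eval (y k)| := by rw [abs_mul, habs, mul_one]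
    have h4 : R.eval (y k) * (-1:ℝ) ^ (n-k) = P.eval (y k) * (-1:ℝ) ^ (n-k) - c := by
      rw [h2, sub_mul, mul_assoc, ← sq, hs, mul_one]
    linarith
  -- roots via IVT
  have hz : ∀ k : Fin n, ∃ z ∈ Set.Ioo (y k) (y (k+1)), R.eval z = 0 := by
    intro k
    have hk : (k:ℕ) ≤ n := k.2.le
    have hk1 : (k:ℕ) + 1 ≤ n := k.2
    have hky : y k < y (k+1) := hmono k (k+1) (by omega) hk1
    have hflip : (-1:ℝ) ^ (n - (k:ℕ)) = -(-1:ℝ) ^ (n - ((k:ℕ)+1)) := by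
      have : n - (k:ℕ) = (n - ((k:ℕ)+1)) + 1 := by omega
      rw [this, pow_succ]; ring
    have ha := hsign k hk
    have hb := hsign (k+1) hk1
    rw [hflip] at ha
    have hcont : ContinuousOn (fun x => R.eval x) (Set.Icc (y k) (y (k+1))) :=
      R.continuous_aeval.continuousOn
    have hs2 : ((-1:ℝ) ^ (n - ((k:ℕ)+1))) ^ 2 = 1 := by
      rw [← pow_mul, mul_comm, pow_mul]; norm_num
    rcases lt_trichotomy (R.eval (y k)) 0 with h | h | h
    · have hb' : 0 < R.eval (y (k+1)) := by nlinarith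
      have := intermediate_value_Ioo hky.le hcont (Set.mem_Ioo.mpr ⟨h, hb'⟩)
      obtain ⟨z, hz1, hz2⟩ := this
      exact ⟨z, hz1, hz2⟩
    · exfalso; rw [h] at ha; simp at ha
    · have hb' : R.eval (y (k+1)) < 0 := by nlinarith
      have := intermediate_value_Ioo' hky.le hcont (Set.mem_Ioo.mpr ⟨hb', h⟩)
      obtain ⟨z, hz1, hz2⟩ := this
      exact ⟨z, hz1, hz2⟩
  choose z hz1 hz2 using hz
  have hyle : ∀ a b : ℕ, a ≤ b → b ≤ n → y a ≤ y b := by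
    intro a b hab hbn
    rcases eq_or_lt_of_le hab with h | h
    · rw [h]
    · exact (hmono a b h hbn).le
  have hinj : Function.Injective z := by
    have key : ∀ i j : Fin n, i < j → z i < z j := by
      intro i j hij
      calc z i < y ((i:ℕ)+1) := (hz1 i).2
        _ ≤ y (j:ℕ) := hyle _ _ (by exact_mod_cast hij) j.2.le
        _ < z j := (hz1 j).1
    intro i j hij
    rcases lt_trichotomy i j with h | h | h
    · exact absurd hij (ne_of_lt (key i j h))
    · exact h
    · exact absurd hij.symm (ne_of_lt (key j i h))
  have hR0 : R = 0 :=
    Polynomial.eq_zero_of_natDegree_lt_card_of_eval_eq_zero R hinj hz2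
      (by simpa using hRdeg)
  -- contradiction
  have hT1 : (Chebyshev.T ℝ n).eval 1 = 1 := by
    have : (1:ℝ) = Real.cos 0 := by simp
    rw [this, Polynomial.Chebyshev.T_real_cos]
    simp
  have hP1 : P.eval 1 = c := by
    have : R.eval 1 = 0 := by rw [hR0]; simp
    rw [hR_def] at this
    simp [hT1] at this
    linarith
  have : c ≤ M := by
    calc c = P.eval 1 := hP1.symm
      _ ≤ |P.eval 1| := le_abs_self _
      _ ≤ M := hle 1 (by norm_num)
  linarith
end

section
/- Let n ≥ 1 be an integer, and let P be a monic real polynomial of degree n such that max_{x∈[−1,1]} |P(x)| ≤ 2^{1−n}. Then P = 2^{1−n}·T_n, where T_n is the n-th Chebyshev polynomial of the first kind. -/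
open Set Polynomial Nat MeasureTheory ENNReal

section ChebAux
open Finset

private lemma leadingCoeff_basisDivisor {a b : ℝ} :
    (Lagrange.basisDivisor a b).leadingCoeff = (a - b)⁻¹ := by
  rw [Lagrange.basisDivisor, leadingCoeff_mul, leadingCoeff_C,
    (monic_X_sub_C b).leadingCoeff, mul_one]

private lemma cheb_aux_s8 : ∀ n : ℕ,
    ((Polynomial.Chebyshev.T ℝ ((n : ℤ) + 1)).natDegree = n + 1 ∧
      (Polynomial.Chebyshev.T ℝ ((n : ℤ) + 1)).leadingCoeff = 2 ^ n) ∧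
    ((Polynomial.Chebyshev.T ℝ ((n : ℤ) + 2)).natDegree = n + 2 ∧
      (Polynomial.Chebyshev.T ℝ ((n : ℤ) + 2)).leadingCoeff = 2 ^ (n + 1)) := by
  intro n
  induction n with
  | zero =>
    simp only [Nat.cast_zero, zero_add, Polynomial.Chebyshev.T_one,
      Polynomial.Chebyshev.T_two, pow_zero, pow_one]
    refine ⟨⟨natDegree_X, leadingCoeff_X⟩, ?_, ?_⟩
    · compute_degree!
    · have h : ((2 : ℝ[X]) * X ^ 2 - 1).natDegree = 2 := by compute_degree!
      rw [leadingCoeff, h]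
      simp [coeff_sub, Polynomial.coeff_ofNat_mul, coeff_one]
  | succ m ih =>
    have e1 : ((m + 1 : ℕ) : ℤ) + 1 = (m : ℤ) + 2 := by push_cast; ring
    have e2 : ((m + 1 : ℕ) : ℤ) + 2 = ((m : ℤ) + 1) + 2 := by push_cast; ring
    refine ⟨by rw [e1]; exact_mod_cast ih.2, ?_⟩
    rw [e2, Polynomial.Chebyshev.T_add_two]
    have e3 : ((m : ℤ) + 1 + 1) = (m : ℤ) + 2 := by ring
    rw [e3]
    obtain ⟨hd2, hl2⟩ := ih.2
    obtain ⟨hd1, hl1⟩ := ih.1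
    have hC : (2 : ℝ[X]) = C 2 := (map_ofNat C 2).symm
    have hT2ne : Polynomial.Chebyshev.T ℝ ((m : ℤ) + 2) ≠ 0 := by
      intro h; rw [h] at hl2; simp at hl2
      exact absurd hl2.symm (by positivity)
    have hT1ne : Polynomial.Chebyshev.T ℝ ((m : ℤ) + 1) ≠ 0 := by
      intro h; rw [h] at hl1; simp at hl1
      exact absurd hl1.symm (by positivity)
    have hXTne : X * Polynomial.Chebyshev.T ℝ ((m : ℤ) + 2) ≠ 0 :=
      mul_ne_zero X_ne_zero hT2ne
    have hAd : (2 * X * Polynomial.Chebyshev.T ℝ ((m : ℤ) + 2)).natDegree = m + 3 := by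
      rw [hC, mul_assoc, natDegree_C_mul (by norm_num : (2:ℝ) ≠ 0),
        natDegree_mul X_ne_zero hT2ne, natDegree_X, hd2]
      omega
    have hAl : (2 * X * Polynomial.Chebyshev.T ℝ ((m : ℤ) + 2)).leadingCoeff = 2 ^ (m + 2) := by
      rw [hC, mul_assoc, leadingCoeff_mul, leadingCoeff_mul, leadingCoeff_C,
        leadingCoeff_X, hl2]
      ring
    have hlt : (Polynomial.Chebyshev.T ℝ ((m : ℤ) + 1)).natDegree
        < (2 * X * Polynomial.Chebyshev.T ℝ ((m : ℤ) + 2)).natDegree := by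
      rw [hAd, hd1]; omega
    constructor
    · rw [natDegree_sub_eq_left_of_natDegree_lt hlt, hAd]
    · rw [leadingCoeff_sub_of_degree_lt (degree_lt_degree hlt), hAl]

private lemma cheb_deg (n : ℕ) (hn : 1 ≤ n) :
    (Polynomial.Chebyshev.T ℝ (n : ℤ)).natDegree = n ∧
      (Polynomial.Chebyshev.T ℝ (n : ℤ)).leadingCoeff = 2 ^ (n - 1) := by
  obtain ⟨m, rfl⟩ := Nat.exists_eq_add_of_le hn
  have e : ((1 + m : ℕ) : ℤ) = (m : ℤ) + 1 := by push_cast; ring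
  rw [e]
  have h := (cheb_aux_s8 m).1
  constructor
  · rw [h.1]; omega
  · rw [h.2]; congr 1; omega
end ChebAux

/-- A monic polynomial of degree `n ≥ 1` with `max_{x ∈ [-1,1]} |P(x)| ≤ 2^{1-n}` must be
`2^{1-n} Tₙ`, where `Tₙ` is the `n`-th Chebyshev polynomial of the first kind. -/
theorem stmt8 (n : ℕ) (hn : 1 ≤ n) (P : Polynomial ℝ) (hP : P.Monic) (hdeg : P.natDegree = n)
    (hbound : sSup ((fun x => |P.eval x|) '' Set.Icc (-1:ℝ) 1) ≤ (2:ℝ) ^ (1 - (n:ℤ))) :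
    P = (2:ℝ) ^ (1 - (n:ℤ)) • Polynomial.Chebyshev.T ℝ n := by
  classical
  have hπ := Real.pi_pos
  have hnR : (0:ℝ) < n := by exact_mod_cast hn
  set c : ℝ := (2:ℝ) ^ (1 - (n:ℤ)) with hc
  have hcpos : (0:ℝ) < c := by positivity
  set T : ℝ[X] := Polynomial.Chebyshev.T ℝ (n : ℤ) with hTdef
  obtain ⟨hTd, hTl⟩ := cheb_deg n hn
  set x : ℕ → ℝ := fun k => Real.cos (k * Real.pi / n) with hxdef
  -- membership of angles
  have hmem : ∀ k : ℕ, k ≤ n → (k * Real.pi / n : ℝ) ∈ Set.Icc 0 Real.pi := by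
    intro k hk
    have hkR : (k:ℝ) ≤ n := by exact_mod_cast hk
    constructor
    · positivity
    · rw [div_le_iff₀ hnR]; nlinarith
  -- strict antitonicity of nodes
  have hanti : ∀ k j : ℕ, k < j → j ≤ n → x j < x k := by
    intro k j hkj hj
    have hkjR : (k:ℝ) < j := by exact_mod_cast hkj
    refine Real.strictAntiOn_cos (hmem k (hkj.le.trans hj)) (hmem j hj) ?_
    gcongr
  have hinj : Set.InjOn x ((Finset.range (n+1) : Finset ℕ) : Set ℕ) := by
    intro a ha b hb hab
    simp only [Finset.coe_range, Set.mem_Iio] at ha hb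
    by_contra hne
    rcases lt_or_gt_of_ne hne with h | h
    · exact absurd hab.symm (ne_of_lt (hanti a b h (Nat.lt_succ_iff.mp hb)))
    · exact absurd hab (ne_of_lt (hanti b a h (Nat.lt_succ_iff.mp ha)))
  -- Chebyshev values at nodes
  have hT : ∀ k : ℕ, k ≤ n → T.eval (x k) = (-1)^k := by
    intro k hk
    rw [hTdef, hxdef]
    simp only
    rw [Polynomial.Chebyshev.T_real_cos]
    have e : ((n:ℤ):ℝ) * ((k:ℝ) * Real.pi / n) = k * Real.pi := by
      push_cast; field_simp
    rw [e]
    simpa using Real.cos_nat_mul_pi_sub 0 k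
  -- bound at nodes
  have hPb : ∀ k : ℕ, |P.eval (x k)| ≤ c := by
    intro k
    refine le_trans (le_csSup ?_ ?_) hbound
    · exact (isCompact_Icc.image_of_continuousOn (P.continuous.abs.continuousOn)).bddAbove
    · exact ⟨x k, ⟨Real.neg_one_le_cos _, Real.cos_le_one _⟩, rfl⟩
  -- Q := c • T is monic of degree n
  have hQl : (c • T).leadingCoeff = 1 := by
    rw [smul_eq_C_mul, leadingCoeff_mul, leadingCoeff_C, hTl, hc]
    have : ((2:ℝ)) ^ (n - 1) = (2:ℝ) ^ ((n:ℤ) - 1) := by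
      rw [← zpow_natCast]
      congr 1
      omega
    rw [this, ← zpow_add₀ (by norm_num : (2:ℝ) ≠ 0)]
    norm_num
  have hQne : c • T ≠ 0 := fun h => by simp [h] at hQl
  have hQd : (c • T).natDegree = n := by
    rw [smul_eq_C_mul, natDegree_C_mul (ne_of_gt hcpos), hTd]
  -- R := c • T - P has degree < n
  set R : ℝ[X] := c • T - P with hRdef
  have hRdeg : R.degree < (n : WithBot ℕ) := by
    have h1 : (c • T).degree = P.degree := by
      rw [degree_eq_natDegree hQne, degree_eq_natDegree hP.ne_zero, hQd, hdeg]
    have := degree_sub_lt h1 hQne (by rw [hQl, hP.leadingCoeff])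
    rwa [degree_eq_natDegree hQne, hQd] at this
  have hRdeg' : R.degree < ((Finset.range (n+1)).card : WithBot ℕ) := by
    rw [Finset.card_range]
    exact lt_of_lt_of_le hRdeg (by exact_mod_cast Nat.le_succ n)
  -- coefficient-n identity from Lagrange interpolation
  have hsum : ∑ i ∈ Finset.range (n+1),
      R.eval (x i) * Lagrange.nodalWeight (Finset.range (n+1)) x i = 0 := by
    have hR0 : R.coeff n = 0 := coeff_eq_zero_of_degree_lt hRdeg
    have hinterp := Lagrange.eq_interpolate hinj hRdeg'
    calc ∑ i ∈ Finset.range (n+1),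
        R.eval (x i) * Lagrange.nodalWeight (Finset.range (n+1)) x i
        = (Lagrange.interpolate (Finset.range (n+1)) x (fun i => R.eval (x i))).coeff n := by
          rw [Lagrange.interpolate_apply, finset_sum_coeff]
          refine Finset.sum_congr rfl fun i hi => ?_
          rw [coeff_C_mul]
          congr 1
          have hdb : (Lagrange.basis (Finset.range (n+1)) x i).natDegree = n := by
            rw [Lagrange.natDegree_basis hinj hi, Finset.card_range]
            omega
          have hlc := coeff_natDegree (p := Lagrange.basis (Finset.range (n+1)) x i)
          rw [hdb] at hlc
          rw [hlc, Lagrange.basis, leadingCoeff_prod, Lagrange.nodalWeight]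
          exact (Finset.prod_congr rfl fun j hj => leadingCoeff_basisDivisor).symm
      _ = R.coeff n := congrArg (fun p => p.coeff n) hinterp.symm
      _ = 0 := hR0
  -- positivity of signed weights
  have hw : ∀ i, i ∈ Finset.range (n+1) →
      0 < (-1:ℝ)^i * Lagrange.nodalWeight (Finset.range (n+1)) x i := by
    intro i hi
    have hi' : i ≤ n := Nat.lt_succ_iff.mp (Finset.mem_range.mp hi)
    have hsplit : (Finset.range (n+1)).erase i
        = Finset.range i ∪ Finset.Ico (i+1) (n+1) := by
      ext j
      simp only [Finset.mem_erase, Finset.mem_range, Finset.mem_union, Finset.mem_Ico]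
      omega
    have hdisj : Disjoint (Finset.range i) (Finset.Ico (i+1) (n+1)) := by
      simp only [Finset.disjoint_left, Finset.mem_range, Finset.mem_Ico]
      omega
    rw [Lagrange.nodalWeight, hsplit, Finset.prod_union hdisj, ← mul_assoc]
    have h1 : (-1:ℝ)^i * ∏ j ∈ Finset.range i, (x i - x j)⁻¹
        = ∏ j ∈ Finset.range i, (x j - x i)⁻¹ := by
      rw [show (-1:ℝ)^i = ∏ _j ∈ Finset.range i, (-1:ℝ) by
        rw [Finset.prod_const, Finset.card_range], ← Finset.prod_mul_distrib]
      refine Finset.prod_congr rfl fun j hj => ?_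
      rw [← neg_sub, inv_neg]
      ring
    rw [h1]
    have hp1 : 0 < ∏ j ∈ Finset.range i, (x j - x i)⁻¹ := by
      refine Finset.prod_pos fun j hj => ?_
      exact inv_pos.mpr (sub_pos.mpr (hanti j i (Finset.mem_range.mp hj) hi'))
    have hp2 : 0 < ∏ j ∈ Finset.Ico (i+1) (n+1), (x i - x j)⁻¹ := by
      refine Finset.prod_pos fun j hj => ?_
      rw [Finset.mem_Ico] at hj
      exact inv_pos.mpr (sub_pos.mpr (hanti i j hj.1 (Nat.lt_succ_iff.mp hj.2)))
    exact mul_pos hp1 hp2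
  -- each term nonneg
  have hterm : ∀ i ∈ Finset.range (n+1),
      0 ≤ R.eval (x i) * Lagrange.nodalWeight (Finset.range (n+1)) x i := by
    intro i hi
    have hi' : i ≤ n := Nat.lt_succ_iff.mp (Finset.mem_range.mp hi)
    have h1 : 0 ≤ (-1:ℝ)^i * R.eval (x i) := by
      have hev : R.eval (x i) = c * (-1)^i - P.eval (x i) := by
        rw [hRdef]
        simp [smul_eq_C_mul, hT i hi']
      rw [hev]
      have h2 := hPb i
      have h3 : (-1:ℝ)^i * P.eval (x i) ≤ |P.eval (x i)| := by
        calc (-1:ℝ)^i * P.eval (x i) ≤ |(-1:ℝ)^i * P.eval (x i)| := le_abs_self _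
          _ = |P.eval (x i)| := by rw [abs_mul, abs_pow, abs_neg, abs_one, one_pow, one_mul]
      have h4 : ((-1:ℝ)^i) * ((-1:ℝ)^i) = 1 := by
        rw [← mul_pow]; norm_num
      nlinarith
    have key : R.eval (x i) * Lagrange.nodalWeight (Finset.range (n+1)) x i
        = ((-1:ℝ)^i * R.eval (x i)) * ((-1:ℝ)^i * Lagrange.nodalWeight (Finset.range (n+1)) x i) := by
      have h4 : ((-1:ℝ)^i) * ((-1:ℝ)^i) = 1 := by
        rw [← mul_pow]; norm_num
      linear_combination (-(R.eval (x i) * Lagrange.nodalWeight (Finset.range (n+1)) x i)) * h4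
    rw [key]
    exact mul_nonneg h1 (hw i hi).le
  -- conclude each eval is zero
  have hev0 : ∀ i ∈ Finset.range (n+1), R.eval (x i) = 0 := by
    intro i hi
    have := (Finset.sum_eq_zero_iff_of_nonneg hterm).mp hsum i hi
    have hwne : Lagrange.nodalWeight (Finset.range (n+1)) x i ≠ 0 := by
      intro h
      have := hw i hi
      rw [h, mul_zero] at this
      exact lt_irrefl _ this
    exact (mul_eq_zero.mp this).resolve_right hwne
  have hR0 : R = 0 :=
    eq_zero_of_degree_lt_of_eval_index_eq_zero _ hinj hRdeg' hev0
  have : c • T = P := sub_eq_zero.mp hR0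
  rw [← this]
end

section
/- Let n ≥ 1 be an integer. Then the minimum of ∫_{−1}^1 P(t)² dt over all monic real polynomials P of degree n equals 2^{2n+1}·(n!)⁴ / ((2n)!² · (2n+1)), and it is attained by the polynomial (n!/(2n)!) · dⁿ/dxⁿ[(x²−1)ⁿ] (the monic multiple of the n-th Legendre polynomial). -/
open Set Polynomial Nat MeasureTheory ENNReal

lemma poly_ii (p : Polynomial ℝ) (a b : ℝ) :
    IntervalIntegrable (fun t => p.eval t) MeasureTheory.volume a b :=
  p.continuous.intervalIntegrable a b

lemma poly_ftc (p : Polynomial ℝ) (a b : ℝ) :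
    ∫ t in a..b, (derivative p).eval t = p.eval b - p.eval a :=
  intervalIntegral.integral_eq_sub_of_hasDerivAt (fun x _ => p.hasDerivAt x)
    (poly_ii (derivative p) a b)

lemma poly_parts (p q : Polynomial ℝ) (a b : ℝ) :
    ∫ t in a..b, p.eval t * (derivative q).eval t =
      p.eval b * q.eval b - p.eval a * q.eval a - ∫ t in a..b, (derivative p).eval t * q.eval t := by
  have h := poly_ftc (p * q) a b
  rw [derivative_mul] at h
  have h2 : (∫ t in a..b, ((derivative p).eval t * q.eval t + p.eval t * (derivative q).eval t))
      = p.eval b * q.eval b - p.eval a * q.eval a := by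
    simpa [eval_mul] using h
  rw [intervalIntegral.integral_add (f := fun t => (derivative p).eval t * q.eval t) (g := fun t => p.eval t * (derivative q).eval t) (((derivative p).continuous.mul q.continuous).intervalIntegrable a b)
    ((p.continuous.mul (derivative q).continuous).intervalIntegrable a b)] at h2
  linarith

/-- the polynomial (X²-1)ⁿ -/
noncomputable def PP (n : ℕ) : Polynomial ℝ := ((X : Polynomial ℝ) ^ 2 - 1) ^ n

lemma dvd_deriv {a : ℝ} {m : ℕ} {p : Polynomial ℝ} (h : ((X : Polynomial ℝ) - C a) ^ (m + 1) ∣ p) :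
    ((X : Polynomial ℝ) - C a) ^ m ∣ derivative p := by
  obtain ⟨q, rfl⟩ := h
  rw [derivative_mul, derivative_pow]
  simp only [Nat.add_sub_cancel]
  refine dvd_add ⟨C ((m:ℝ)+1) * derivative (X - C a) * q, by push_cast; ring⟩
    ⟨(X - C a) * derivative q, by ring⟩

lemma dvd_iterate (n : ℕ) (a : ℝ) (h : ((X : Polynomial ℝ) - C a) ^ n ∣ PP n) :
    ∀ k ≤ n, ((X : Polynomial ℝ) - C a) ^ (n - k) ∣ derivative^[k] (PP n) := by
  intro k hk
  induction k with
  | zero => simpa using h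
  | succ k ih =>
    have hk' : k ≤ n := Nat.le_of_succ_le hk
    have := ih hk'
    rw [Function.iterate_succ_apply']
    have hnk : n - k = (n - (k+1)) + 1 := by omega
    rw [hnk] at this
    exact dvd_deriv this

lemma pp_root (n : ℕ) (a : ℝ) (ha : a = 1 ∨ a = -1) :
    ((X : Polynomial ℝ) - C a) ^ n ∣ PP n := by
  unfold PP
  apply pow_dvd_pow_of_dvd
  rcases ha with rfl | rfl
  · exact ⟨X + 1, by ring_nf; simp [C_1]; ring⟩
  · exact ⟨X - 1, by ring_nf; simp [C_1]; ring⟩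

lemma eval_iterate_zero (n k : ℕ) (hk : k < n) (a : ℝ) (ha : a = 1 ∨ a = -1) :
    (derivative^[k] (PP n)).eval a = 0 := by
  obtain ⟨q, hq⟩ := dvd_iterate n a (pp_root n a ha) k hk.le
  have hnk : n - k ≠ 0 := by omega
  rw [hq]
  simp [eval_pow, zero_pow hnk]

lemma reduce (n : ℕ) (k : ℕ) (hk : k ≤ n) (R : Polynomial ℝ) :
    ∫ t in (-1:ℝ)..1, R.eval t * (derivative^[n] (PP n)).eval t =
      (-1 : ℝ) ^ k * ∫ t in (-1:ℝ)..1, (derivative^[k] R).eval t * (derivative^[n - k] (PP n)).eval t := by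
  induction k with
  | zero => simp
  | succ k ih =>
    rw [ih (Nat.le_of_succ_le hk)]
    have hnk : n - k = (n - (k+1)) + 1 := by omega
    have hstep : (∫ t in (-1:ℝ)..1, (derivative^[k] R).eval t * (derivative^[n - k] (PP n)).eval t)
        = - ∫ t in (-1:ℝ)..1, (derivative^[k+1] R).eval t * (derivative^[n - (k+1)] (PP n)).eval t := by
      rw [hnk, Function.iterate_succ_apply']
      rw [poly_parts]
      rw [eval_iterate_zero n _ (by omega) 1 (Or.inl rfl),
          eval_iterate_zero n _ (by omega) (-1) (Or.inr rfl)]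
      have he : derivative (derivative^[k] R) = derivative^[k+1] R :=
        (Function.iterate_succ_apply' _ _ _).symm
      rw [he]
      ring
    rw [hstep]
    ring

lemma cont_pow (n : ℕ) : Continuous (fun t : ℝ => (1 - t^2)^n) := by fun_prop

lemma In_rec (n : ℕ) :
    (2*(n:ℝ)+3) * ∫ t in (-1:ℝ)..1, (1-t^2)^(n+1) =
      (2*(n:ℝ)+2) * ∫ t in (-1:ℝ)..1, (1-t^2)^n := by
  have hd : ∀ x ∈ Set.uIcc (-1:ℝ) 1, HasDerivAt (fun t : ℝ => t * (1-t^2)^(n+1))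
      ((2*(n:ℝ)+3) * (1-x^2)^(n+1) - (2*(n:ℝ)+2) * (1-x^2)^n) x := by
    intro x _
    have h1 : HasDerivAt (fun t : ℝ => t * (1-t^2)^(n+1))
        (1 * (1-x^2)^(n+1) + x * ((↑(n+1) : ℝ) * (1-x^2)^(n+1-1) * (0 - (2:ℕ)*x^(2-1)))) x :=
      (hasDerivAt_id x).mul (((hasDerivAt_const x (1:ℝ)).sub (hasDerivAt_pow 2 x)).pow (n+1))
    convert h1 using 1
    simp only [Nat.add_sub_cancel, pow_one]
    push_cast
    ring
  have hint : IntervalIntegrable (fun x : ℝ => (2*(n:ℝ)+3) * (1-x^2)^(n+1) - (2*(n:ℝ)+2) * (1-x^2)^n)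
      MeasureTheory.volume (-1) 1 := by
    apply Continuous.intervalIntegrable; fun_prop
  have h := intervalIntegral.integral_eq_sub_of_hasDerivAt hd hint
  have hb : ((1:ℝ) * (1-(1:ℝ)^2)^(n+1)) - ((-1:ℝ) * (1-(-1:ℝ)^2)^(n+1)) = 0 := by norm_num
  rw [intervalIntegral.integral_sub (f := fun t => (2*(n:ℝ)+3) * (1-t^2)^(n+1)) (g := fun t => (2*(n:ℝ)+2) * (1-t^2)^n) ((continuous_const.mul (cont_pow (n+1))).intervalIntegrable _ _)
    ((continuous_const.mul (cont_pow n)).intervalIntegrable _ _),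
    intervalIntegral.integral_const_mul, intervalIntegral.integral_const_mul] at h
  norm_num at h
  linarith

lemma In (n : ℕ) : (∫ t in (-1:ℝ)..1, (1-t^2)^n)
    = 2^(2*n+1) * ((n) ! : ℝ)^2 / (((2*n+1) !) : ℝ) := by
  induction n with
  | zero => norm_num
  | succ n ih =>
    have hrec := In_rec n
    rw [ih] at hrec
    have h3 : (2*(n:ℝ)+3) ≠ 0 := by positivity
    have e1 : ((2*(n+1)+1) !) = (2*n+3) * ((2*n+2) * ((2*n+1) !)) := by
      rw [show 2*(n+1)+1 = (2*n+1)+1+1 by ring, Nat.factorial_succ, Nat.factorial_succ]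

    have e2 : (((n+1) !) : ℝ) = (n+1) * ((n) ! : ℝ) := by rw [Nat.factorial_succ]; push_cast; ring
    have hf1 : (((2*n+1) !) : ℝ) ≠ 0 := Nat.cast_ne_zero.2 (Nat.factorial_ne_zero _)
    have heq : (∫ t in (-1:ℝ)..1, (1-t^2)^(n+1))
        = (2*(n:ℝ)+2) * (2^(2*n+1) * ((n) ! : ℝ)^2 / (((2*n+1) !) : ℝ)) / (2*(n:ℝ)+3) := by
      field_simp at hrec ⊢
      linarith
    rw [heq, e1]
    push_cast
    rw [e2]
    field_simp
    ring

lemma PP_natDegree (n : ℕ) : (PP n).natDegree = 2 * n := by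
  unfold PP
  rw [show ((1:Polynomial ℝ)) = C 1 from (map_one C).symm]
  rw [(monic_X_pow_sub_C (1:ℝ) two_ne_zero).natDegree_pow, natDegree_X_pow_sub_C]
  ring

lemma PP_monic (n : ℕ) : (PP n).Monic := by
  unfold PP
  rw [show ((1:Polynomial ℝ)) = C 1 from (map_one C).symm]
  exact (monic_X_pow_sub_C (1:ℝ) two_ne_zero).pow n

lemma g_coeff (n : ℕ) : (derivative^[n] (PP n)).coeff n = ((2*n).descFactorial n : ℝ) := by
  rw [coeff_iterate_derivative]
  have h1 : n + n = 2 * n := by ring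
  rw [h1, show (PP n).coeff (2*n) = 1 from by
    rw [← PP_natDegree n]; exact (PP_monic n).coeff_natDegree]
  simp

lemma g_natDegree (n : ℕ) : (derivative^[n] (PP n)).natDegree = n := by
  apply natDegree_eq_of_le_of_coeff_ne_zero
  · exact (natDegree_iterate_derivative _ _).trans (by rw [PP_natDegree]; omega)
  · rw [g_coeff]
    have : (2*n).descFactorial n ≠ 0 := fun h => by
      have := Nat.descFactorial_eq_zero_iff_lt.1 h; omega
    exact_mod_cast this

lemma D2n (n : ℕ) : derivative^[2*n] (PP n) = C (((2*n) !) : ℝ) := by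
  have hd : (derivative^[2*n] (PP n)).natDegree ≤ 0 :=
    (natDegree_iterate_derivative _ _).trans (by rw [PP_natDegree]; omega)
  rw [eq_C_of_natDegree_le_zero hd, coeff_iterate_derivative]
  congr 1
  rw [zero_add, Nat.descFactorial_self, show (PP n).coeff (2*n) = 1 from by
    rw [← PP_natDegree n]; exact (PP_monic n).coeff_natDegree]
  simp

lemma PP_eval (n : ℕ) (t : ℝ) : (PP n).eval t = (-1:ℝ)^n * (1-t^2)^n := by
  simp only [PP, eval_pow, eval_sub, eval_one, eval_X]
  rw [show (t^2 - 1) = -(1-t^2) by ring, neg_pow]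

lemma int_g_sq (n : ℕ) :
    ∫ t in (-1:ℝ)..1, ((derivative^[n] (PP n)).eval t)^2
      = ((2*n) ! : ℝ) * (2^(2*n+1) * ((n) ! : ℝ)^2 / (((2*n+1) !) : ℝ)) := by
  have hred := reduce n n le_rfl (derivative^[n] (PP n))
  have h1 : derivative^[n] (derivative^[n] (PP n)) = C (((2*n) !) : ℝ) := by
    rw [← Function.iterate_add_apply, show n + n = 2*n by ring]
    exact D2n n
  rw [Nat.sub_self, Function.iterate_zero_apply, h1] at hred
  have h2 : (fun t : ℝ => (C (((2*n) !) : ℝ)).eval t * (PP n).eval t)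
      = fun t : ℝ => ((2*n) ! : ℝ) * ((-1:ℝ)^n * (1-t^2)^n) := by
    funext t; rw [eval_C, PP_eval]
  simp only [h2] at hred
  rw [intervalIntegral.integral_const_mul, intervalIntegral.integral_const_mul, In] at hred
  have h3 : (-1:ℝ)^n * (-1:ℝ)^n = 1 := by
    rw [← pow_add]
    exact Even.neg_one_pow ⟨n, rfl⟩
  calc ∫ t in (-1:ℝ)..1, ((derivative^[n] (PP n)).eval t)^2
      = ∫ t in (-1:ℝ)..1, (derivative^[n] (PP n)).eval t * (derivative^[n] (PP n)).eval t := by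
        simp only [sq]
    _ = ((2*n) ! : ℝ) * (2^(2*n+1) * ((n) ! : ℝ)^2 / (((2*n+1) !) : ℝ)) := by
        rw [hred, show ∀ a b : ℝ, (-1:ℝ)^n * (a * ((-1:ℝ)^n * b)) = ((-1:ℝ)^n*(-1:ℝ)^n)*(a*b)
          from fun a b => by ring, h3, one_mul]

lemma orth (n : ℕ) (R : Polynomial ℝ) (hR : R.natDegree < n) :
    ∫ t in (-1:ℝ)..1, R.eval t * (derivative^[n] (PP n)).eval t = 0 := by
  have h := reduce n n le_rfl R
  rw [iterate_derivative_eq_zero hR] at h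
  simpa using h

lemma L_coeff (n : ℕ) (hn : 1 ≤ n) :
    ((((n) ! : ℝ) / (((2 * n) !) : ℝ)) • (derivative^[n] (PP n))).coeff n = 1 := by
  rw [Polynomial.coeff_smul, g_coeff, smul_eq_mul]
  have hfact : ((n) !) * (2*n).descFactorial n = (2*n) ! := by
    have := Nat.factorial_mul_descFactorial (show n ≤ 2*n by omega)
    rwa [show 2*n - n = n by omega] at this
  have h2 : (((2*n) !) : ℝ) ≠ 0 := Nat.cast_ne_zero.2 (Nat.factorial_ne_zero _)
  field_simp
  exact_mod_cast hfact

lemma L_monic (n : ℕ) (hn : 1 ≤ n) :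
    ((((n) ! : ℝ) / (((2 * n) !) : ℝ)) • (derivative^[n] (PP n))).Monic :=
  monic_of_natDegree_le_of_coeff_eq_one n
    ((natDegree_smul_le _ _).trans (g_natDegree n).le) (L_coeff n hn)

lemma L_natDegree (n : ℕ) (hn : 1 ≤ n) :
    ((((n) ! : ℝ) / (((2 * n) !) : ℝ)) • (derivative^[n] (PP n))).natDegree = n :=
  natDegree_eq_of_le_of_coeff_ne_zero
    ((natDegree_smul_le _ _).trans (g_natDegree n).le) (by rw [L_coeff n hn]; norm_num)

lemma L_int (n : ℕ) :
    (∫ t in (-1:ℝ)..1, (((((n) ! : ℝ) / (((2 * n) !) : ℝ)) • (derivative^[n] (PP n))).eval t) ^ 2)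
      = 2 ^ (2 * n + 1) * ((n) ! : ℝ) ^ 4 / ((((2 * n) !) : ℝ) ^ 2 * (2 * n + 1)) := by
  set c : ℝ := ((n) ! : ℝ) / (((2 * n) !) : ℝ) with hc
  have h1 : (fun t : ℝ => ((c • (derivative^[n] (PP n))).eval t) ^ 2)
      = fun t : ℝ => c^2 * ((derivative^[n] (PP n)).eval t)^2 := by
    funext t
    rw [Polynomial.eval_smul, smul_eq_mul]
    ring
  simp only [h1]
  rw [intervalIntegral.integral_const_mul, int_g_sq]
  have h2 : (((2*n) !) : ℝ) ≠ 0 := Nat.cast_ne_zero.2 (Nat.factorial_ne_zero _)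
  have h3 : ((2*n+1) ! : ℝ) = (2*(n:ℝ)+1) * (((2*n) !) : ℝ) := by
    rw [Nat.factorial_succ]; push_cast; ring
  have h4 : (2*(n:ℝ)+1) ≠ 0 := by positivity
  rw [hc, h3]
  field_simp

/-- The minimum of `∫_{-1}^1 P(t)² dt` over monic polynomials of degree `n` is
`2^{2n+1} (n!)⁴ / ((2n)!² (2n+1))`, attained by the monic multiple
`(n!/(2n)!) · dⁿ/dxⁿ (x²-1)ⁿ` of the `n`-th Legendre polynomial. -/
theorem stmt10 (n : ℕ) (hn : 1 ≤ n) :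
    (∀ Q : Polynomial ℝ, Q.Monic → Q.natDegree = n →
      2 ^ (2 * n + 1) * (n ! : ℝ) ^ 4 / (((2 * n)! : ℝ) ^ 2 * (2 * n + 1)) ≤
        ∫ t in (-1:ℝ)..1, (Q.eval t) ^ 2) ∧
    (((n ! : ℝ) / ((2 * n)! : ℝ)) • (Polynomial.derivative^[n]
        (((X : Polynomial ℝ) ^ 2 - 1) ^ n))).Monic ∧
    (((n ! : ℝ) / ((2 * n)! : ℝ)) • (Polynomial.derivative^[n]
        (((X : Polynomial ℝ) ^ 2 - 1) ^ n))).natDegree = n ∧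
    (∫ t in (-1:ℝ)..1, ((((n ! : ℝ) / ((2 * n)! : ℝ)) • (Polynomial.derivative^[n]
        (((X : Polynomial ℝ) ^ 2 - 1) ^ n))).eval t) ^ 2) =
      2 ^ (2 * n + 1) * (n ! : ℝ) ^ 4 / (((2 * n)! : ℝ) ^ 2 * (2 * n + 1)) := by
  
  have hPP : (((X : Polynomial ℝ) ^ 2 - 1) ^ n) = PP n := rfl
  rw [hPP]
  set c : ℝ := ((n) ! : ℝ) / (((2 * n) !) : ℝ) with hc
  set L : Polynomial ℝ := c • (derivative^[n] (PP n)) with hL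
  refine ⟨?_, L_monic n hn, L_natDegree n hn, L_int n⟩
  intro Q hQm hQd
  rw [← L_int n]
  set R : Polynomial ℝ := Q - L with hR
  have hQLR : ∀ t : ℝ, Q.eval t = L.eval t + R.eval t := by
    intro t; rw [hR, eval_sub]; ring
  by_cases hR0 : R = 0
  · have : Q = L := by rw [hR, sub_eq_zero] at hR0; exact hR0
    rw [this]
  · have hRdeg : R.natDegree < n := by
      have hdeg : Q.degree = L.degree := by
        rw [degree_eq_natDegree hQm.ne_zero, degree_eq_natDegree (L_monic n hn).ne_zero,
          hQd, L_natDegree n hn]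
      have hd := Polynomial.degree_sub_lt hdeg hQm.ne_zero
        (by rw [hQm.leadingCoeff, (L_monic n hn).leadingCoeff])
      rw [degree_eq_natDegree hQm.ne_zero, hQd] at hd
      exact (Polynomial.natDegree_lt_iff_degree_lt hR0).2 hd
    have hLR : ∫ t in (-1:ℝ)..1, L.eval t * R.eval t = 0 := by
      have he : (fun t : ℝ => L.eval t * R.eval t)
          = fun t : ℝ => c * (R.eval t * (derivative^[n] (PP n)).eval t) := by
        funext t
        rw [hL, Polynomial.eval_smul, smul_eq_mul]
        ring
      simp only [he]
      rw [intervalIntegral.integral_const_mul, orth n R hRdeg, mul_zero]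
    have hsq : ∀ t : ℝ, (Q.eval t)^2
        = (L.eval t)^2 + (2 * (L.eval t * R.eval t) + (R.eval t)^2) := by
      intro t; rw [hQLR t]; ring
    have hi1 : IntervalIntegrable (fun t : ℝ => (L.eval t)^2) MeasureTheory.volume (-1) 1 :=
      (L.continuous.pow 2).intervalIntegrable _ _
    have hi2 : IntervalIntegrable (fun t : ℝ => L.eval t * R.eval t) MeasureTheory.volume (-1) 1 :=
      (L.continuous.mul R.continuous).intervalIntegrable _ _
    have hi3 : IntervalIntegrable (fun t : ℝ => (R.eval t)^2) MeasureTheory.volume (-1) 1 :=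
      (R.continuous.pow 2).intervalIntegrable _ _
    have hsplit : (∫ t in (-1:ℝ)..1, (Q.eval t)^2)
        = (∫ t in (-1:ℝ)..1, (L.eval t)^2)
          + ((∫ t in (-1:ℝ)..1, 2 * (L.eval t * R.eval t)) + ∫ t in (-1:ℝ)..1, (R.eval t)^2) := by
      simp only [hsq]
      rw [intervalIntegral.integral_add hi1 (((hi2.const_mul 2)).add hi3),
        intervalIntegral.integral_add (hi2.const_mul 2) hi3]
    have hR2 : 0 ≤ ∫ t in (-1:ℝ)..1, (R.eval t)^2 :=
      intervalIntegral.integral_nonneg (by norm_num) (fun t _ => sq_nonneg _)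
    rw [hsplit, intervalIntegral.integral_const_mul, hLR]
    linarith
end
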